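/- arXiv:0802.1060 — 5 statements merged into one kernel-verified Lean document; each statement's English description precedes it below -/
import Mathlib

section
/- Let B be a commutative local ring and let M be a nonzero B-module of finite length such that no quotient module of M is decomposable. Then M is cyclic, i.e., there exists a ∈ M with M = B·a; in particular M is isomorphic to B/ann(a). -/
/-- A module is decomposable if it is the internal direct sum of two nonzero submodules. -/
def IsDecomposableModule (B : Type*) (M : Type*) [CommRing B] [AddCommGroup M]
    [Module B M] : Prop :=
  ∃ N₁ N₂ : Submodule B M, N₁ ≠ ⊥ ∧ N₂ ≠ ⊥ ∧ IsCompl N₁ N₂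

/-- Let `B` be a commutative local ring and `M` a nonzero `B`-module of finite length such
that no quotient module of `M` is decomposable.  Then `M` is cyclic: there is `a : M` with
`M = B·a`; in particular `M ≅ B ⧸ ann(a)`. -/
theorem cyclic_of_no_decomposable_quotient
    (B M : Type*) [CommRing B] [IsLocalRing B] [AddCommGroup M] [Module B M]
    [Nontrivial M] (hfl : IsFiniteLength B M)
    (hquot : ∀ K : Submodule B M, ¬ IsDecomposableModule B (M ⧸ K)) :
    ∃ a : M, Submodule.span B {a} = ⊤ ∧
      Nonempty ((B ⧸ Ideal.torsionOf B M a) ≃ₗ[B] M) := by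
  have hnoe : IsNoetherian B M := (isFiniteLength_iff_isNoetherian_isArtinian.mp hfl).1
  have hfin : Module.Finite B M := ⟨IsNoetherian.noetherian ⊤⟩
  let I : Ideal B := IsLocalRing.maximalIdeal B
  have hjac : I ≤ Ideal.jacobson ⊥ :=
    le_of_eq (IsLocalRing.jacobson_eq_maximalIdeal ⊥ bot_ne_top).symm
  -- `I • ⊤ ≠ ⊤` by Nakayama
  have hKne : (I • ⊤ : Submodule B M) ≠ ⊤ := by
    intro h
    have : (⊤ : Submodule B M) = ⊥ :=
      Submodule.eq_bot_of_le_smul_of_le_jacobson_bot I ⊤ (IsNoetherian.noetherian ⊤)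
        (by rw [h]) hjac
    exact top_ne_bot this
  haveI : Nontrivial (M ⧸ (I • ⊤ : Submodule B M)) :=
    Submodule.Quotient.nontrivial_iff.mpr hKne
  have htors : Module.IsTorsionBySet B (M ⧸ (I • ⊤ : Submodule B M)) I :=
    Module.isTorsionBySet_quotient_ideal_smul M I
  letI hmod : Module (B ⧸ I) (M ⧸ (I • ⊤ : Submodule B M)) := htors.module
  have hmk : ∀ (b : B) (y : M ⧸ (I • ⊤ : Submodule B M)),
      (Ideal.Quotient.mk I b) • y = b • y := fun b y => htors.mk_smul b y
  haveI htower : IsScalarTower B (B ⧸ I) (M ⧸ (I • ⊤ : Submodule B M)) := by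
    constructor
    intro b c x
    obtain ⟨r, rfl⟩ := Ideal.Quotient.mk_surjective c
    have h1 : (b • Ideal.Quotient.mk I r) = Ideal.Quotient.mk I (b * r) := rfl
    rw [h1, hmk, hmk, mul_smul]
  haveI hmax : I.IsMaximal := IsLocalRing.maximalIdeal.isMaximal B
  -- claim: every nonzero element of the quotient spans it over `B`
  have key : ∀ x : M ⧸ (I • ⊤ : Submodule B M), x ≠ 0 → Submodule.span B {x} = ⊤ := by
    intro x hx
    by_contra hne
    set N : Submodule B (M ⧸ (I • ⊤ : Submodule B M)) := Submodule.span B {x} with hN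
    have hNbot : N ≠ ⊥ := by
      simp [hN, Submodule.span_singleton_eq_bot, hx]
    -- upgrade N to a `B ⧸ I`-submodule
    let N' : Submodule (B ⧸ I) (M ⧸ (I • ⊤ : Submodule B M)) :=
      { carrier := (N : Set (M ⧸ (I • ⊤ : Submodule B M)))
        add_mem' := fun h1 h2 => N.add_mem h1 h2
        zero_mem' := N.zero_mem
        smul_mem' := by
          intro c y hy
          obtain ⟨b, rfl⟩ := Ideal.Quotient.mk_surjective c
          rw [hmk b y]
          exact N.smul_mem b hy }
    obtain ⟨P', hP'⟩ := @Submodule.exists_isCompl (B ⧸ I) _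
      (Ideal.Quotient.field I).toDivisionRing _ hmod N'
    set P : Submodule B (M ⧸ (I • ⊤ : Submodule B M)) := P'.restrictScalars B with hP
    have hmemP : ∀ y, y ∈ P ↔ y ∈ P' := fun y => Iff.rfl
    have hPbot : P ≠ ⊥ := by
      intro h
      have hP'bot : P' = ⊥ := by
        ext y
        rw [← hmemP y, h]
        simp
      have hNtop : N' = ⊤ := by
        have := hP'.codisjoint
        rw [codisjoint_iff, hP'bot, sup_bot_eq] at this
        exact this
      apply hne
      refine eq_top_iff.mpr fun z _ => ?_
      have hz : z ∈ N' := by rw [hNtop]; trivial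
      exact hz
    refine hquot _ ⟨N, P, hNbot, hPbot, ?_, ?_⟩
    · -- disjoint
      rw [disjoint_iff]
      ext y
      simp only [Submodule.mem_inf, Submodule.mem_bot]
      constructor
      · intro ⟨h1, h2⟩
        have hy : y ∈ N' ⊓ P' := ⟨h1, (hmemP y).mp h2⟩
        rw [disjoint_iff.mp hP'.disjoint] at hy
        simpa using hy
      · intro hy; simp [hy]
    · -- codisjoint
      rw [codisjoint_iff, eq_top_iff]
      intro z _
      have hz : z ∈ N' ⊔ P' := by
        rw [codisjoint_iff.mp hP'.codisjoint]; trivial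
      obtain ⟨u, hu, v, hv, rfl⟩ := Submodule.mem_sup.mp hz
      exact Submodule.mem_sup.mpr ⟨u, hu, v, (hmemP v).mpr hv, rfl⟩
  -- pick a nonzero element of the quotient
  obtain ⟨x, hx⟩ := exists_ne (0 : M ⧸ (I • ⊤ : Submodule B M))
  obtain ⟨a, rfl⟩ := Submodule.Quotient.mk_surjective _ x
  have hspanq :
      Submodule.span B {Submodule.Quotient.mk (p := (I • ⊤ : Submodule B M)) a} = ⊤ := key _ hx
  -- transfer to M via Nakayama
  have hmap : Submodule.map (I • ⊤ : Submodule B M).mkQ (Submodule.span B {a}) = ⊤ := by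
    rw [Submodule.map_span, Set.image_singleton]
    exact hspanq
  have hsup : (I • ⊤ : Submodule B M) ⊔ Submodule.span B {a} = ⊤ :=
    (Submodule.map_mkQ_eq_top _ _).mp hmap
  have hspan : Submodule.span B {a} = ⊤ := by
    have h1 : (⊤ : Submodule B M) ≤ Submodule.span B {a} ⊔ I • ⊤ := by
      rw [sup_comm, hsup]
    have h2 := Submodule.le_of_le_smul_of_le_jacobson_bot (N := Submodule.span B {a})
      (N' := (⊤ : Submodule B M)) (IsNoetherian.noetherian ⊤) hjac h1
    exact le_antisymm le_top h2
  exact ⟨a, hspan, ⟨(Ideal.quotTorsionOfEquivSpanSingleton B M a).trans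
    (LinearEquiv.ofTop _ hspan)⟩⟩
end

section
/- Let k be a field, B = k[x₁, …, x_g] the polynomial ring, and m = (x₁, …, x_g). Let M be a nonzero B-module of finite length that is annihilated by some power of m and has no decomposable submodules. Then there exist positive integers e₁, …, e_g and an injective B-module homomorphism M → B/(x₁^{e₁}, …, x_g^{e_g}); in particular M is isomorphic to I/J for some ideals J = (x₁^{e₁}, …, x_g^{e_g}) ⊆ I ⊆ B. -/
open MvPolynomial

section Aux
variable {k : Type*} [Field k] {g : ℕ}

lemma aux_monomial_mem (N : ℕ) (α : Fin g →₀ ℕ) (c : k) (i : Fin g) (h : N ≤ α i) :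
    monomial α c ∈ Ideal.span (Set.range fun j : Fin g => (X j : MvPolynomial (Fin g) k) ^ N) := by
  have hst : Finsupp.single i N + (α - Finsupp.single i N) = α := by
    ext j
    simp only [Finsupp.add_apply, Finsupp.tsub_apply, Finsupp.single_apply]
    by_cases hj : i = j
    · subst hj; simp [Nat.add_sub_cancel' h]
    · simp [hj]
  have : monomial α c = (X i : MvPolynomial (Fin g) k) ^ N * monomial (α - Finsupp.single i N) c := by
    rw [X_pow_eq_monomial, monomial_mul, one_mul, hst]
  rw [this]
  exact Ideal.mul_mem_right _ _ (Ideal.subset_span ⟨i, rfl⟩)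

lemma aux_mem_of_support (N : ℕ) (p : MvPolynomial (Fin g) k)
    (h : ∀ α ∈ p.support, ∃ i, N ≤ α i) :
    p ∈ Ideal.span (Set.range fun j : Fin g => (X j : MvPolynomial (Fin g) k) ^ N) := by
  rw [← support_sum_monomial_coeff p]
  refine Ideal.sum_mem _ fun α hα => ?_
  obtain ⟨i, hi⟩ := h α hα
  exact aux_monomial_mem N α _ i hi

lemma aux_coeff_eq_zero (N : ℕ) (p : MvPolynomial (Fin g) k)
    (hp : p ∈ Ideal.span (Set.range fun j : Fin g => (X j : MvPolynomial (Fin g) k) ^ N))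
    (α : Fin g →₀ ℕ) (hα : ∀ i, α i < N) : coeff α p = 0 := by
  revert α
  induction hp using Submodule.span_induction with
  | mem q hq =>
      intro α hα
      obtain ⟨i, rfl⟩ := hq
      show coeff α ((X i : MvPolynomial (Fin g) k) ^ N) = 0
      rw [X_pow_eq_monomial, coeff_monomial]
      have hne : Finsupp.single i N ≠ α := by
        intro h
        have := hα i
        rw [← h] at this
        simp at this
      simp [hne]
  | zero => intro α hα; simp
  | add x y hx hy ihx ihy => intro α hα; simp [coeff_add, ihx α hα, ihy α hα]
  | smul r x hx ih =>
      intro α hα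
      rw [smul_eq_mul, coeff_mul]
      refine Finset.sum_eq_zero fun uv huv => ?_
      rw [Finset.HasAntidiagonal.mem_antidiagonal] at huv
      have h2 : coeff uv.2 x = 0 := by
        refine ih uv.2 fun i => lt_of_le_of_lt ?_ (hα i)
        calc uv.2 i ≤ uv.1 i + uv.2 i := Nat.le_add_left _ _
        _ = α i := by rw [← Finsupp.add_apply, huv]
      rw [h2, mul_zero]

lemma aux_exists_socle {M : Type*} [AddCommGroup M] [Module (MvPolynomial (Fin g) k) M] (n : ℕ) :
    ∀ x : M, x ≠ 0 →
      (∀ p ∈ (Ideal.span (Set.range (X : Fin g → MvPolynomial (Fin g) k))) ^ n, p • x = 0) →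
      ∃ y : M, y ≠ 0 ∧ y ∈ Submodule.span (MvPolynomial (Fin g) k) {x} ∧
        ∀ i, (X i : MvPolynomial (Fin g) k) • y = 0 := by
  induction n with
  | zero =>
      intro x hx h
      exact absurd (by simpa using h 1 (by simp [Submodule.mem_top])) hx
  | succ n ih =>
      intro x hx h
      by_cases hX : ∀ i : Fin g, (X i : MvPolynomial (Fin g) k) • x = 0
      · exact ⟨x, hx, Submodule.mem_span_singleton_self x, hX⟩
      · push_neg at hX
        obtain ⟨i, hi⟩ := hX
        obtain ⟨y, hy0, hy1, hy2⟩ := ih (X i • x) hi (fun p hp => by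
          have := h (p * X i) (by
            rw [pow_succ]
            exact Ideal.mul_mem_mul hp (Ideal.subset_span ⟨i, rfl⟩))
          rwa [smul_smul])
        refine ⟨y, hy0, ?_, hy2⟩
        have : Submodule.span (MvPolynomial (Fin g) k) {(X i : MvPolynomial (Fin g) k) • x} ≤
            Submodule.span (MvPolynomial (Fin g) k) {x} := by
          rw [Submodule.span_le, Set.singleton_subset_iff]
          exact Submodule.smul_mem _ _ (Submodule.mem_span_singleton_self x)
        exact this hy1

/-- lift a k-linear map vanishing on an ideal to the quotient -/
noncomputable def qliftAux {R : Type*} [CommRing R] [Algebra k R] (I : Ideal R)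
    {V : Type*} [AddCommGroup V] [Module k V] (L : R →ₗ[k] V)
    (h : ∀ p ∈ I, L p = 0) : (R ⧸ I) →ₗ[k] V :=
  ((I.restrictScalars k).liftQ L (fun p hp => h p hp)).comp
    (Submodule.Quotient.restrictScalarsEquiv k I).symm.toLinearMap

@[simp] lemma qliftAux_mk {R : Type*} [CommRing R] [Algebra k R] (I : Ideal R)
    {V : Type*} [AddCommGroup V] [Module k V] (L : R →ₗ[k] V)
    (h : ∀ p ∈ I, L p = 0) (p : R) :
    qliftAux I L h (Ideal.Quotient.mk I p) = L p := rfl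

end Aux

set_option maxHeartbeats 1000000 in
/-- Let `k` be a field, `B = k[x₁,…,x_g]`, and `m = (x₁,…,x_g)`.  Let `M` be a nonzero
`B`-module of finite length, annihilated by some power of `m`, with no decomposable
submodules.  Then there are positive integers `e₁,…,e_g` and an injective `B`-module
homomorphism `M → B/(x₁^{e₁},…,x_g^{e_g})`. -/
theorem embeds_in_AS_module
    (k : Type*) [Field k] (g : ℕ)
    (M : Type*) [AddCommGroup M] [Module (MvPolynomial (Fin g) k) M] [Nontrivial M]
    (hfl : IsFiniteLength (MvPolynomial (Fin g) k) M)
    (hann : ∃ n : ℕ, ∀ p ∈ (Ideal.span (Set.range (X : Fin g → MvPolynomial (Fin g) k))) ^ n,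
      ∀ m : M, p • m = 0)
    (hsub : ∀ N : Submodule (MvPolynomial (Fin g) k) M,
      ¬ IsDecomposableModule (MvPolynomial (Fin g) k) N) :
    ∃ e : Fin g → ℕ, (∀ i, 0 < e i) ∧
      ∃ φ : M →ₗ[MvPolynomial (Fin g) k]
          (MvPolynomial (Fin g) k ⧸
            Ideal.span (Set.range fun i : Fin g => (X i : MvPolynomial (Fin g) k) ^ e i)),
        Function.Injective φ := by
  classical
  obtain ⟨n, hann⟩ := hann
  set Bp := MvPolynomial (Fin g) k with hBp
  set N := n + 1 with hN
  -- the k-module structure on M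
  letI : Module k M := Module.compHom M (algebraMap k Bp)
  have hks : ∀ (c : k) (x : M), c • x = algebraMap k Bp c • x := fun _ _ => rfl
  letI : IsScalarTower k Bp M := ⟨fun c b x => by
    rw [Algebra.smul_def, mul_smul]; rfl⟩
  -- the socle
  set mI : Ideal Bp := Ideal.span (Set.range (X : Fin g → Bp)) with hmI
  have hmIann : ∀ z : M, ∀ p ∈ mI, (∀ i : Fin g, (X i : Bp) • z = 0) → p • z = 0 := by
    intro z p hp hz
    induction hp using Submodule.span_induction with
    | mem q hq => obtain ⟨i, rfl⟩ := hq; exact hz i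
    | zero => simp
    | add x y hx hy ihx ihy => rw [add_smul, ihx, ihy, add_zero]
    | smul r x hx ih => rw [smul_eq_mul, mul_smul, ih, smul_zero]
  let Soc : Submodule Bp M :=
    { carrier := {x | ∀ i : Fin g, (X i : Bp) • x = 0}
      add_mem' := fun ha hb i => by rw [smul_add, ha i, hb i, add_zero]
      zero_mem' := fun i => smul_zero _
      smul_mem' := fun b x hx i => by
        rw [smul_smul, mul_comm, ← smul_smul, hx i, smul_zero] }
  obtain ⟨x₀, hx₀⟩ := exists_ne (0 : M)
  obtain ⟨s₀, hs₀0, -, hs₀X⟩ := aux_exists_socle n x₀ hx₀ (fun p hp => hann p hp x₀)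
  -- every socle element is a k-multiple of s₀
  have key : ∀ y : M, (∀ i : Fin g, (X i : Bp) • y = 0) → y ∈ Submodule.span k {s₀} := by
    intro y hy
    by_contra hns
    letI : Module k ↥Soc := Module.compHom _ (algebraMap k Bp)
    have hcoe : ∀ (c : k) (x : ↥Soc), ((c • x : ↥Soc) : M) = c • (x : M) := fun c x => rfl
    -- B acts through constants on the socle
    have hconst : ∀ (b : Bp) (x : ↥Soc), b • x = (coeff 0 b) • x := by
      intro b x
      apply Subtype.ext
      have hxm : ∀ i : Fin g, (X i : Bp) • (x : M) = 0 := x.2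
      have hb : b - C (coeff 0 b) ∈ mI := by
        have h1 : (fun j : Fin g => (X j : Bp) ^ 1) = (X : Fin g → Bp) := by
          funext j; exact pow_one _
        rw [hmI, ← h1]
        apply aux_mem_of_support 1
        intro α hα
        by_contra hno
        push_neg at hno
        have hα0 : α = 0 := by
          ext i
          exact Nat.lt_one_iff.mp (hno i)
        rw [mem_support_iff, hα0] at hα
        apply hα
        rw [coeff_sub, coeff_zero_C, sub_self]
      have h0 : (b - C (coeff 0 b)) • (x : M) = 0 := hmIann _ _ hb hxm
      have hbc : b • (x : M) = (C (coeff 0 b) : Bp) • (x : M) := by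
        have h := sub_smul b (C (coeff 0 b)) (x : M)
        rw [h0] at h
        exact sub_eq_zero.mp h.symm
      show b • (x : M) = (coeff 0 b) • (x : M)
      rw [hks, algebraMap_eq]
      exact hbc
    -- lift k-submodules of the socle to B-submodules
    have hlift : ∀ W : Submodule k ↥Soc, ∃ W' : Submodule Bp ↥Soc,
        ∀ z : ↥Soc, z ∈ W' ↔ z ∈ W := by
      intro W
      refine ⟨{ carrier := ↑W
                add_mem' := fun ha hb => W.add_mem ha hb
                zero_mem' := W.zero_mem
                smul_mem' := fun b z hz => by
                  show b • z ∈ W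
                  rw [hconst b z]
                  exact W.smul_mem _ hz }, fun z => Iff.rfl⟩
    let s₀' : ↥Soc := ⟨s₀, hs₀X⟩
    let y' : ↥Soc := ⟨y, hy⟩
    obtain ⟨N₂, hcompl⟩ := Submodule.exists_isCompl (Submodule.span k {s₀'})
    have hyN₁ : y' ∉ Submodule.span k {s₀'} := by
      intro h
      obtain ⟨c, hc⟩ := Submodule.mem_span_singleton.mp h
      apply hns
      refine Submodule.mem_span_singleton.mpr ⟨c, ?_⟩
      have := congrArg (Subtype.val) hc
      rw [hcoe] at this
      exact this
    have hN2ne : N₂ ≠ ⊥ := by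
      intro hbot
      rw [hbot] at hcompl
      have : Submodule.span k {s₀'} = ⊤ := codisjoint_bot.mp hcompl.codisjoint
      exact hyN₁ (this ▸ Submodule.mem_top)
    obtain ⟨W₁, hW₁⟩ := hlift (Submodule.span k {s₀'})
    obtain ⟨W₂, hW₂⟩ := hlift N₂
    apply hsub Soc
    refine ⟨W₁, W₂, ?_, ?_, ?_, ?_⟩
    · rw [Submodule.ne_bot_iff]
      refine ⟨s₀', (hW₁ s₀').mpr (Submodule.mem_span_singleton_self _), ?_⟩
      intro h
      exact hs₀0 (congrArg Subtype.val h)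
    · rw [Submodule.ne_bot_iff]
      obtain ⟨z, hz, hz0⟩ := Submodule.ne_bot_iff N₂ |>.mp hN2ne
      exact ⟨z, (hW₂ z).mpr hz, hz0⟩
    · rw [Submodule.disjoint_def]
      intro z h1 h2
      exact Submodule.disjoint_def.mp hcompl.disjoint z ((hW₁ z).mp h1) ((hW₂ z).mp h2)
    · rw [codisjoint_iff, eq_top_iff]
      intro z _hz
      have hz : z ∈ Submodule.span k {s₀'} ⊔ N₂ := by
        rw [codisjoint_iff.mp hcompl.codisjoint]
        exact Submodule.mem_top
      obtain ⟨u, hu, v, hv, huv⟩ := Submodule.mem_sup.mp hz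
      exact Submodule.mem_sup.mpr ⟨u, (hW₁ u).mpr hu, v, (hW₂ v).mpr hv, huv⟩
  -- functional not vanishing on s₀
  haveI : Module.Free k M := Module.Free.of_divisionRing k M
  have hfex : ∃ f : Module.Dual k M, f s₀ ≠ 0 := by
    by_contra h
    push_neg at h
    exact hs₀0 ((Module.forall_dual_apply_eq_zero_iff k s₀).mp h)
  obtain ⟨f, hf⟩ := hfex
  set J : Ideal Bp := Ideal.span (Set.range fun i : Fin g => (X i : Bp) ^ N) with hJdef
  have hJle : J ≤ mI ^ N := by
    rw [hJdef, hmI, Ideal.span_le]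
    rintro _ ⟨i, rfl⟩
    exact Ideal.pow_mem_pow (Ideal.subset_span (Set.mem_range_self i)) N
  have hJann : ∀ p ∈ J, ∀ z : M, p • z = 0 := fun p hp z =>
    hann p (Ideal.pow_le_pow_right (Nat.le_succ n) (hJle hp)) z
  set τ : Fin g →₀ ℕ := Finsupp.equivFunOnFinite.symm (fun _ => n) with hτdef
  have hτ : ∀ i, τ i = n := fun i => rfl
  have hlamker : ∀ p ∈ J, (lcoeff k τ) p = 0 := fun p hp =>
    aux_coeff_eq_zero N p (hJdef ▸ hp) τ (fun i => by rw [hτ]; omega)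
  set lamb : (Bp ⧸ J) →ₗ[k] k := qliftAux J (lcoeff k τ) hlamker with hlambdef
  set Θ : (Bp ⧸ J) →ₗ[k] Module.Dual k (Bp ⧸ J) :=
    (LinearMap.mul k (Bp ⧸ J)).compr₂ lamb with hΘdef
  have hΘapp : ∀ a b : Bp ⧸ J, Θ a b = lamb (a * b) := fun a b => rfl
  -- finite dimensionality of the quotient
  haveI hfd : Module.Finite k (Bp ⧸ J) := by
    constructor
    have hfin : (Set.Iic τ).Finite := Set.finite_Iic τ
    have hspan : Submodule.span k ((fun α : Fin g →₀ ℕ =>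
        Ideal.Quotient.mk J (monomial α 1)) '' Set.Iic τ) = ⊤ := by
      rw [eq_top_iff]
      rintro a -
      obtain ⟨p, rfl⟩ := Ideal.Quotient.mk_surjective a
      have hdec : Ideal.Quotient.mk J p = Ideal.Quotient.mk J
          (∑ α ∈ p.support.filter (fun α => α ≤ τ), monomial α (coeff α p)) := by
        rw [Ideal.Quotient.eq]
        have hsplit : p - (∑ α ∈ p.support.filter (fun α => α ≤ τ), monomial α (coeff α p)) =
            ∑ α ∈ p.support.filter (fun α => ¬ α ≤ τ), monomial α (coeff α p) := by
          have htot := Finset.sum_filter_add_sum_filter_not p.support (fun α => α ≤ τ)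
            (fun α => monomial α (coeff α p))
          rw [support_sum_monomial_coeff] at htot
          rw [sub_eq_iff_eq_add, add_comm]
          exact htot.symm
        rw [hsplit]
        refine Ideal.sum_mem _ fun α hα => ?_
        rw [Finset.mem_filter] at hα
        obtain ⟨i, hi⟩ : ∃ i, N ≤ α i := by
          by_contra hno
          push_neg at hno
          refine hα.2 (Finsupp.le_def.mpr fun i => ?_)
          have h1 := hno i
          have h2 := hτ i
          omega
        rw [hJdef]
        exact aux_monomial_mem N α _ i hi
      rw [hdec, map_sum]
      refine Submodule.sum_mem _ fun α hα => ?_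
      rw [Finset.mem_filter] at hα
      have hmon : (Ideal.Quotient.mk J) (monomial α (coeff α p)) =
          coeff α p • (Ideal.Quotient.mk J) (monomial α 1) := by
        rw [show monomial α (coeff α p) = coeff α p • monomial α (1 : k) by
          rw [smul_monomial, smul_eq_mul, mul_one]]
        rw [← Ideal.Quotient.mkₐ_eq_mk (R₁ := k)]
        exact map_smul (Ideal.Quotient.mkₐ k J).toLinearMap _ _
      rw [hmon]
      exact Submodule.smul_mem _ _ (Submodule.subset_span ⟨α, hα.2, rfl⟩)
    rw [← hspan]
    exact Submodule.fg_span (hfin.image _)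
  -- Θ is injective
  have hΘinj : Function.Injective Θ := by
    rw [injective_iff_map_eq_zero]
    intro a ha
    obtain ⟨p, rfl⟩ := Ideal.Quotient.mk_surjective a
    rw [Ideal.Quotient.eq_zero_iff_mem]
    by_contra hpJ
    have hex : ∃ α ∈ p.support, α ≤ τ := by
      by_contra hno
      push_neg at hno
      apply hpJ
      rw [hJdef] at *
      apply aux_mem_of_support N p
      intro α hα
      have h1 := hno α hα
      rw [Finsupp.le_def] at h1
      push_neg at h1
      obtain ⟨i, hi⟩ := h1
      have h2 := hτ i
      exact ⟨i, by omega⟩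
    obtain ⟨α, hαs, hατ⟩ := hex
    have h1 := congrArg (fun F => F (Ideal.Quotient.mk J (monomial (τ - α) 1))) ha
    simp only [LinearMap.zero_apply] at h1
    rw [hΘapp, ← map_mul, qliftAux_mk, lcoeff_apply, coeff_mul_monomial'] at h1
    rw [if_pos tsub_le_self, tsub_tsub_cancel_of_le hατ, mul_one] at h1
    exact (mem_support_iff.mp hαs) h1
  have hΘsurj : Function.Surjective Θ :=
    (LinearMap.injective_iff_surjective_of_finrank_eq_finrank
      (Subspace.dual_finrank_eq).symm).mp hΘinj
  let ΘE : (Bp ⧸ J) ≃ₗ[k] Module.Dual k (Bp ⧸ J) := LinearEquiv.ofBijective Θ ⟨hΘinj, hΘsurj⟩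
  -- the pairing maps
  let actL : M → (Bp →ₗ[k] M) := fun m =>
    { toFun := fun b => b • m
      map_add' := fun a b => add_smul a b m
      map_smul' := fun c b => by simp only [RingHom.id_apply]; exact smul_assoc c b m }
  have hactker : ∀ m : M, ∀ p ∈ J, (f.comp (actL m)) p = 0 := fun m p hp => by
    show f (p • m) = 0
    rw [hJann p hp m, map_zero]
  let φ0 : M → Bp ⧸ J := fun m => ΘE.symm (qliftAux J (f.comp (actL m)) (hactker m))
  have hpair : ∀ (m : M) (b : Bp), lamb (φ0 m * Ideal.Quotient.mk J b) = f (b • m) := by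
    intro m b
    have h1 : Θ (φ0 m) = qliftAux J (f.comp (actL m)) (hactker m) :=
      ΘE.apply_symm_apply (qliftAux J (f.comp (actL m)) (hactker m))
    have h2 := congrArg (fun F => F (Ideal.Quotient.mk J b)) h1
    simp only [qliftAux_mk] at h2
    exact h2
  have huniq : ∀ a₁ a₂ : Bp ⧸ J,
      (∀ b : Bp, lamb (a₁ * Ideal.Quotient.mk J b) = lamb (a₂ * Ideal.Quotient.mk J b)) →
      a₁ = a₂ := by
    intro a₁ a₂ h
    apply hΘinj
    apply LinearMap.ext
    intro c
    obtain ⟨b, rfl⟩ := Ideal.Quotient.mk_surjective c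
    exact h b
  have hsmulA : ∀ (r : Bp) (a : Bp ⧸ J), r • a = Ideal.Quotient.mk J r * a := by
    intro r a
    obtain ⟨q, rfl⟩ := Ideal.Quotient.mk_surjective a
    rw [← map_mul, ← smul_eq_mul]
    exact (Submodule.Quotient.mk_smul J r q).symm
  refine ⟨fun _ => N, fun i => Nat.succ_pos n, ?_⟩
  show ∃ φ : M →ₗ[Bp] (Bp ⧸ J), Function.Injective φ
  refine ⟨{ toFun := φ0
            map_add' := fun m₁ m₂ => huniq _ _ fun b => by
              rw [hpair, add_mul, map_add, hpair, hpair, smul_add, map_add]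
            map_smul' := fun b₀ m => huniq _ _ fun b => by
              simp only [RingHom.id_apply]
              rw [hpair, hsmulA b₀ (φ0 m)]
              rw [show Ideal.Quotient.mk J b₀ * φ0 m * Ideal.Quotient.mk J b
                    = φ0 m * Ideal.Quotient.mk J (b₀ * b) by rw [map_mul]; ring]
              rw [hpair, smul_smul, mul_comm b b₀] }, ?_⟩
  rw [injective_iff_map_eq_zero]
  intro m hm
  have hm' : φ0 m = 0 := hm
  by_contra hm0
  obtain ⟨y, hy0, hyspan, hyX⟩ := aux_exists_socle n m hm0 (fun p hp => hann p hp m)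
  obtain ⟨b, hb⟩ := Submodule.mem_span_singleton.mp hyspan
  have hfy : f y = 0 := by
    rw [← hb, ← hpair m b, hm', zero_mul, map_zero]
  obtain ⟨c, hc⟩ := Submodule.mem_span_singleton.mp (key y hyX)
  have hc0 : c ≠ 0 := fun h => hy0 (by rw [← hc, h, zero_smul])
  rw [← hc, map_smul, smul_eq_mul] at hfy
  exact hf ((mul_eq_zero.mp hfy).resolve_left hc0)
end

section
/- Let k be a field of characteristic 0, let e ≤ f be positive integers, and let R = k[x, y]/(x^e, y^f) with its standard grading. For any integer d with 0 ≤ d ≤ e − 1 and any nonzero homogeneous element v of degree d in R, one has (x + y)^{e+f−2d−2} · v ≠ 0 in R. -/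
section CoreLemma
open Polynomial

lemma deriv_helper {k : Type*} [CommRing k] (n : ℕ) (B : k[X]) :
    X * derivative (X ^ n * B) =
      C (n : k) * (X ^ n * B) + X ^ (n + 1) * derivative B := by
  rcases n with _ | m
  · simp [pow_succ]
  · rw [derivative_mul, derivative_X_pow]
    simp only [Nat.add_sub_cancel]
    push_cast
    ring

lemma core_lemma {k : Type*} [Field k] [CharZero k] (α : ℕ) (β : ℕ) :
    ∀ (e' : ℕ) (A B : k[X]), α ≤ e' →
      (∀ m, α ≤ m → A.coeff m = 0) → (∀ m, β ≤ m → B.coeff m = 0) →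
      ((1 + X) ^ (α + β) ∣ A + X ^ e' * B) → A = 0 ∧ B = 0 := by
  induction β with
  | zero =>
    intro e' A B hae hA hB hdvd
    have hB0 : B = 0 := Polynomial.ext fun m => hB m (Nat.zero_le m)
    rw [hB0, mul_zero, add_zero, add_zero] at hdvd
    have hA0 : A = 0 := by
      by_contra h
      have hdeg : A.natDegree < α := by
        rcases lt_or_ge A.natDegree α with h4 | h4
        · exact h4
        · exact absurd (hA _ h4) (Polynomial.coeff_ne_zero_of_eq_degree
            (Polynomial.degree_eq_natDegree h))
      have h1 : ((1 + X : k[X])) = X + C 1 := by simp [add_comm]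
      have hd2 : ((1 + X : k[X]) ^ α).natDegree = α := by
        rw [natDegree_pow, h1, natDegree_X_add_C, mul_one]
      have h6 := Polynomial.natDegree_le_of_dvd hdvd h
      rw [hd2] at h6
      omega
    exact ⟨hA0, hB0⟩
  | succ β ih =>
    intro e' A B hae hA hB hdvd
    set F : k[X] := A + X ^ e' * B with hF
    have h1 : (1 + X : k[X]) ^ (α + β) ∣ F := dvd_trans (pow_dvd_pow _ (by omega)) hdvd
    have hder : derivative ((1 + X : k[X]) ^ (α + (β + 1))) =
        C ((α + (β + 1) : ℕ) : k) * (1 + X) ^ (α + β) := by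
      rw [derivative_pow]
      simp
    have h2 : (1 + X : k[X]) ^ (α + β) ∣ derivative F := by
      obtain ⟨H, hH⟩ := hdvd
      rw [hH, derivative_mul, hder]
      exact dvd_add (Dvd.dvd.mul_right (dvd_mul_left _ _) H)
        ((pow_dvd_pow _ (by omega)).mul_right _)
    set A₁ : k[X] := C (e' : k) * A - X * derivative A with hA₁
    set B₁ : k[X] := -derivative B with hB₁
    have hG : C (e' : k) * F - X * derivative F = A₁ + X ^ (e' + 1) * B₁ := by
      rw [hF, derivative_add, mul_add, mul_add, deriv_helper, hA₁, hB₁]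
      ring
    have h3 : (1 + X : k[X]) ^ (α + β) ∣ A₁ + X ^ (e' + 1) * B₁ := by
      rw [← hG]
      exact dvd_sub (h1.mul_left _) (h2.mul_left _)
    have hA1c : ∀ m, α ≤ m → A₁.coeff m = 0 := by
      intro m hm
      rcases m with _ | n
      · simp [hA₁, hA 0 hm]
      · have h5 : α ≤ n + 1 := hm
        simp [hA₁, coeff_sub, coeff_C_mul, coeff_X_mul, coeff_derivative, hA _ h5]
    have hB1c : ∀ m, β ≤ m → B₁.coeff m = 0 := by
      intro m hm
      simp [hB₁, coeff_derivative, hB (m + 1) (by omega)]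
    obtain ⟨hA10, hB10⟩ := ih (e' + 1) A₁ B₁ (by omega) hA1c hB1c h3
    have hA0 : A = 0 := by
      ext m
      rw [coeff_zero]
      rcases le_or_gt α m with h4 | h4
      · exact hA m h4
      · have h5 : A₁.coeff m = 0 := by rw [hA10, coeff_zero]
        rcases m with _ | n
        · rw [hA₁, coeff_sub, coeff_C_mul] at h5
          simp only [mul_coeff_zero, coeff_X_zero, zero_mul, sub_zero] at h5
          have he'ne : (e' : k) ≠ 0 := Nat.cast_ne_zero.2 (by omega)
          exact (mul_eq_zero.1 h5).resolve_left he'ne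
        · rw [hA₁, coeff_sub, coeff_C_mul, coeff_X_mul, coeff_derivative] at h5
          have hfac : A.coeff (n + 1) * ((e' : k) - ((n + 1 : ℕ) : k)) = 0 := by
            push_cast at h5 ⊢
            linear_combination h5
          have hne : ((e' : k) - ((n + 1 : ℕ) : k)) ≠ 0 := by
            rw [← Nat.cast_sub (by omega)]
            exact Nat.cast_ne_zero.2 (by omega)
          exact (mul_eq_zero.1 hfac).resolve_right hne
    have hB0 : B = 0 := by
      have hd : derivative B = 0 := by
        have h7 := hB10
        rwa [hB₁, neg_eq_zero] at h7
      have hBC : B = C (B.coeff 0) := eq_C_of_derivative_eq_zero hd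
      obtain ⟨H, hH⟩ := hdvd
      rw [hF, hA0, zero_add] at hH
      have hev := congrArg (Polynomial.eval (-1 : k)) hH
      rw [eval_mul, eval_mul, eval_pow, eval_pow, eval_add, eval_one, eval_X] at hev
      rw [show (1 + (-1 : k)) = 0 by ring, zero_pow (by omega), zero_mul] at hev
      rw [hBC, eval_C] at hev
      have hb : B.coeff 0 = 0 := by
        rcases mul_eq_zero.1 hev with h8 | h8
        · exact absurd h8 (pow_ne_zero _ (by norm_num))
        · exact h8
      rw [hBC, hb, map_zero]
    exact ⟨hA0, hB0⟩

end CoreLemma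


section Bridge
variable {k : Type*} [CommRing k]

lemma StrongLef.supp_deg {w : MvPolynomial (Fin 2) k} {D : ℕ} (hw : w.IsHomogeneous D)
    {μ : Fin 2 →₀ ℕ} (hμ : μ ∈ w.support) : μ 0 + μ 1 = D := by
  have h1 : μ.degree = D := by
    by_contra h
    exact (MvPolynomial.mem_support_iff.1 hμ) (hw.coeff_eq_zero h)
  rw [← h1, Finsupp.degree_apply]
  rw [show (∑ i ∈ μ.support, μ i) = ∑ i : Fin 2, μ i from
    Finset.sum_subset (Finset.subset_univ _) (fun i _ hi => Finsupp.notMem_support_iff.1 hi)]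
  rw [Fin.sum_univ_two]

lemma StrongLef.aeval_coeff_general (w : MvPolynomial (Fin 2) k) (a : ℕ) :
    (MvPolynomial.aeval ![(Polynomial.X : Polynomial k), 1] w).coeff a =
      ∑ μ ∈ w.support, if μ 0 = a then MvPolynomial.coeff μ w else 0 := by
  conv_lhs => rw [w.as_sum]
  rw [map_sum, Polynomial.finset_sum_coeff]
  refine Finset.sum_congr rfl fun μ _ => ?_
  rw [MvPolynomial.aeval_monomial]
  have h2 : (μ.prod fun n e => (![(Polynomial.X : Polynomial k), 1] n) ^ e) =
      Polynomial.X ^ (μ 0) := by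
    rw [Finsupp.prod_fintype _ _ (fun i => pow_zero _), Fin.prod_univ_two]
    simp
  rw [h2]
  simp [Polynomial.coeff_C_mul, Polynomial.coeff_X_pow, Polynomial.algebraMap_eq, mul_ite, eq_comm]

lemma StrongLef.coeff_aeval_homog {w : MvPolynomial (Fin 2) k} {D : ℕ}
    (hw : w.IsHomogeneous D) (a b : ℕ) (hab : a + b = D) :
    (MvPolynomial.aeval ![(Polynomial.X : Polynomial k), 1] w).coeff a =
      MvPolynomial.coeff (Finsupp.single 0 a + Finsupp.single 1 b) w := by
  rw [StrongLef.aeval_coeff_general]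
  have hμ0 : ((Finsupp.single (0 : Fin 2) a + Finsupp.single 1 b : (Fin 2) →₀ ℕ)) 0 = a := by simp
  rw [Finset.sum_eq_single (Finsupp.single (0 : Fin 2) a + Finsupp.single 1 b)]
  · rw [if_pos hμ0]
  · intro μ hμ hne
    rw [if_neg]
    intro h0
    apply hne
    have hdeg := StrongLef.supp_deg hw hμ
    ext i
    fin_cases i
    · simpa using h0
    · have h1 : μ 1 = b := by omega
      simpa using h1
  · intro h
    rw [if_pos hμ0, MvPolynomial.notMem_support_iff.1 h]

lemma StrongLef.coeff_aeval_zero {w : MvPolynomial (Fin 2) k} {D : ℕ}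
    (hw : w.IsHomogeneous D) {a : ℕ} (ha : D < a) :
    (MvPolynomial.aeval ![(Polynomial.X : Polynomial k), 1] w).coeff a = 0 := by
  rw [StrongLef.aeval_coeff_general]
  refine Finset.sum_eq_zero fun μ hμ => ?_
  rw [if_neg]
  have := StrongLef.supp_deg hw hμ
  omega

end Bridge

open MvPolynomial


/-- Let `k` be a field of characteristic `0`, `e ≤ f` positive integers, and
`R = k[x,y]/(x^e, y^f)` with its standard grading.  For `0 ≤ d ≤ e - 1` and any nonzero
homogeneous element of degree `d` of `R` (i.e. the image of a homogeneous polynomial `v` of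
degree `d` whose image in `R` is nonzero), one has `(x+y)^(e+f-2d-2) ⬝ v ≠ 0` in `R`. -/
theorem smul_pow_add_ne_zero_of_homogeneous
    (k : Type*) [Field k] [CharZero k] (e f : ℕ) (he : 0 < e) (hef : e ≤ f)
    (d : ℕ) (hd : d ≤ e - 1) (v : MvPolynomial (Fin 2) k) (hv : v.IsHomogeneous d)
    (hv0 : Ideal.Quotient.mk
        (Ideal.span {(X 0 : MvPolynomial (Fin 2) k) ^ e, (X 1 : MvPolynomial (Fin 2) k) ^ f})
        v ≠ 0) :
    Ideal.Quotient.mk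
        (Ideal.span {(X 0 : MvPolynomial (Fin 2) k) ^ e, (X 1 : MvPolynomial (Fin 2) k) ^ f})
        ((X 0 + X 1) ^ (e + f - 2 * d - 2) * v) ≠ 0 := by
  intro hw
  have hde : d + 1 ≤ e := by omega
  have hdf : d + 1 ≤ f := by omega
  set N : ℕ := e + f - 2 * d - 2 with hN
  set α : ℕ := e - d - 1 with hα
  set β : ℕ := f - d - 1 with hβ
  have hαβ : N = α + β := by omega
  have hvne : v ≠ 0 := by
    rintro rfl
    exact hv0 (map_zero _)
  have hwI : (X 0 + X 1) ^ N * v ∈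
      Ideal.span {(X 0 : MvPolynomial (Fin 2) k) ^ e, (X 1 : MvPolynomial (Fin 2) k) ^ f} :=
    (Ideal.Quotient.eq_zero_iff_mem).1 hw
  have hcoeff0 : ∀ μ : Fin 2 →₀ ℕ, μ 0 < e → μ 1 < f →
      MvPolynomial.coeff μ ((X 0 + X 1) ^ N * v) = 0 := by
    intro μ h0 h1
    obtain ⟨g, h, hgh⟩ := Ideal.mem_span_pair.1 hwI
    rw [← hgh, MvPolynomial.coeff_add, X_pow_eq_monomial, X_pow_eq_monomial,
      MvPolynomial.coeff_mul_monomial', MvPolynomial.coeff_mul_monomial']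
    rw [if_neg, if_neg, add_zero]
    · exact fun hle => absurd (Finsupp.single_le_iff.1 hle) (by omega)
    · exact fun hle => absurd (Finsupp.single_le_iff.1 hle) (by omega)
  have hXY : ((X 0 + X 1 : MvPolynomial (Fin 2) k)).IsHomogeneous 1 :=
    (isHomogeneous_X _ _).add (isHomogeneous_X _ _)
  have hwHom : (((X 0 + X 1) ^ N * v : MvPolynomial (Fin 2) k)).IsHomogeneous (N + d) := by
    have := (hXY.pow N).mul hv
    simpa using this
  set ψ : MvPolynomial (Fin 2) k →ₐ[k] Polynomial k :=
    MvPolynomial.aeval ![(Polynomial.X : Polynomial k), 1] with hψ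
  set p : Polynomial k := ψ v with hp
  set q : Polynomial k := ψ ((X 0 + X 1) ^ N * v) with hq
  have hqp : q = (1 + Polynomial.X) ^ N * p := by
    rw [hq, map_mul, map_pow, map_add, hψ]
    simp [add_comm, hp, hψ]
  -- window vanishing
  have hwindow : ∀ m, α ≤ m → m < e → q.coeff m = 0 := by
    intro m hm1 hm2
    have hab : m + (N + d - m) = N + d := by omega
    rw [hq, StrongLef.coeff_aeval_homog hwHom m (N + d - m) hab]
    refine hcoeff0 _ ?_ ?_
    · simpa using hm2
    · have : N + d - m < f := by omega
      simpa using this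
  have htop : ∀ t, N + d < t → q.coeff t = 0 := fun t ht =>
    StrongLef.coeff_aeval_zero hwHom ht
  set A : Polynomial k := q %ₘ (Polynomial.X ^ e) with hA
  set B : Polynomial k := q /ₘ (Polynomial.X ^ e) with hB
  have hmod : A + Polynomial.X ^ e * B = q :=
    Polynomial.modByMonic_add_div q (Polynomial.X ^ e)
  have hAdeg : A.degree < (e : WithBot ℕ) := by
    have := Polynomial.degree_modByMonic_lt q (Polynomial.monic_X_pow e (R := k))
    rwa [Polynomial.degree_X_pow] at this
  have hAhigh : ∀ m, e ≤ m → A.coeff m = 0 := fun m hm =>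
    Polynomial.coeff_eq_zero_of_degree_lt (lt_of_lt_of_le hAdeg (by exact_mod_cast hm))
  have hAc : ∀ m, α ≤ m → A.coeff m = 0 := by
    intro m hm
    rcases lt_or_ge m e with h4 | h4
    · have h5 : A.coeff m = q.coeff m - (Polynomial.X ^ e * B).coeff m := by
        rw [← hmod, Polynomial.coeff_add]
        ring
      rw [h5, hwindow m hm h4, mul_comm, Polynomial.coeff_mul_X_pow', if_neg (by omega),
        sub_zero]
    · exact hAhigh m h4
  have hBc : ∀ m, β ≤ m → B.coeff m = 0 := by
    intro m hm
    have h9 : (Polynomial.X ^ e * B).coeff (m + e) = B.coeff m :=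
      Polynomial.coeff_X_pow_mul B e m
    have h10 : q.coeff (m + e) = A.coeff (m + e) + B.coeff m := by
      rw [← hmod, Polynomial.coeff_add, h9]
    rw [htop (m + e) (by omega), hAhigh (m + e) (by omega), zero_add] at h10
    exact h10.symm
  have hdvd : (1 + Polynomial.X) ^ (α + β) ∣ A + Polynomial.X ^ e * B := by
    rw [hmod, hqp, ← hαβ]
    exact Dvd.intro p rfl
  obtain ⟨hA0, hB0⟩ := core_lemma α β e A B (by omega) hAc hBc hdvd
  have hq0 : q = 0 := by rw [← hmod, hA0, hB0, mul_zero, add_zero]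
  have hXne : (1 + Polynomial.X : Polynomial k) ^ N ≠ 0 := by
    apply pow_ne_zero
    intro h
    simpa [Polynomial.coeff_one] using congrArg (fun r => Polynomial.coeff r 1) h
  have hp0 : p = 0 := by
    rcases mul_eq_zero.1 (hqp ▸ hq0) with h | h
    · exact absurd h hXne
    · exact h
  obtain ⟨μ, hμ⟩ := MvPolynomial.exists_coeff_ne_zero hvne
  have hμs : μ ∈ v.support := MvPolynomial.mem_support_iff.2 hμ
  have hdeg := StrongLef.supp_deg hv hμs
  have hcp : p.coeff (μ 0) = MvPolynomial.coeff μ v := by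
    rw [hp, StrongLef.coeff_aeval_homog hv (μ 0) (μ 1) hdeg]
    congr 1
    ext i
    fin_cases i <;> simp
  rw [hp0, Polynomial.coeff_zero] at hcp
  exact hμ hcp.symm
end

section
/- Let k be a field of characteristic 0, let e ≤ f be positive integers, and let R = k[x, y]/(x^e, y^f) with its standard grading. For any integer d with 0 ≤ d ≤ e − 1 there exists a nonzero homogeneous element w of degree d in R such that (x + y)^{e+f−2d−1} · w = 0 in R, and w is unique up to multiplication by a nonzero scalar: any two homogeneous degree-d elements killed by (x + y)^{e+f−2d−1} are proportional. -/
set_option linter.unusedSectionVars false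
set_option maxHeartbeats 1000000

namespace LefschetzAux

section Univariate
open Polynomial
variable {k : Type*} [Field k] [CharZero k]


variable {k : Type*} [Field k] [CharZero k]

lemma pow_sub_dvd_iterate_derivative (a : k) (P : k[X]) (n m : ℕ)
    (h : (X - C a) ^ n ∣ P) : (X - C a) ^ (n - m) ∣ derivative^[m] P := by
  induction m with
  | zero => simpa using h
  | succ m ih =>
    rw [Function.iterate_succ_apply']
    obtain ⟨Q, hQ⟩ := ih
    rcases Nat.eq_zero_or_pos (n - m) with h0 | hpos
    · have : n - (m+1) = 0 := by omega
      simp [this]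
    · have hnm : n - (m + 1) = (n - m) - 1 := by omega
      rw [hQ, derivative_mul, derivative_pow, hnm]
      refine dvd_add ⟨C (((n - m : ℕ)) : k) * derivative (X - C a) * Q, by ring⟩ ?_
      have hpow : (X - C a) ^ (n - m) = (X - C a) ^ (n - m - 1) * (X - C a) := by
        rw [← pow_succ]; congr 1; omega
      exact ⟨(X - C a) * derivative Q, by rw [hpow]; ring⟩

lemma natDegree_le_of_iterate_derivative_eq_zero (P : k[X]) (n : ℕ)
    (h : derivative^[n + 1] P = 0) : P.natDegree ≤ n := by
  rw [natDegree_le_iff_coeff_eq_zero]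
  intro N hN
  have hc := congrArg (fun q => Polynomial.coeff q (N - (n+1))) h
  simp only [coeff_iterate_derivative, coeff_zero] at hc
  have hNn : N - (n + 1) + (n + 1) = N := by omega
  rw [hNn] at hc
  have hpos : N.descFactorial (n + 1) ≠ 0 := by
    rw [Ne, Nat.descFactorial_eq_zero_iff_lt]
    omega
  rcases smul_eq_zero.mp hc with h1 | h2
  · exact absurd h1 (by exact_mod_cast hpos)
  · exact h2

omit [CharZero k] in
lemma one_sub_X_pow_eq (m : ℕ) :
    ((1 : k[X]) - X) ^ m = C ((-1 : k) ^ m) * (X - C 1) ^ m := by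
  rw [← neg_sub X (1:k[X]), neg_pow]
  simp [map_pow]

omit [CharZero k] in
lemma natDegree_one_sub_X_pow (m : ℕ) : (((1 : k[X]) - X) ^ m).natDegree = m := by
  rw [one_sub_X_pow_eq, natDegree_C_mul (by simp : ((-1:k)^m) ≠ 0),
    (monic_X_sub_C (1:k)).natDegree_pow, natDegree_X_sub_C, mul_one]

omit [CharZero k] in
lemma one_sub_X_pow_ne_zero (m : ℕ) : ((1 : k[X]) - X) ^ m ≠ 0 := by
  rw [one_sub_X_pow_eq]
  exact mul_ne_zero (by simp) (pow_ne_zero _ (X_sub_C_ne_zero (1:k)))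

omit [CharZero k] in
lemma X_sub_C_pow_dvd_one_sub_X_pow_mul (m : ℕ) (h : k[X]) :
    (X - C 1) ^ m ∣ ((1:k[X]) - X) ^ m * h := by
  rw [one_sub_X_pow_eq]
  exact Dvd.dvd.mul_right (Dvd.dvd.mul_left dvd_rfl _) h

/-- The solution predicate: `e = a + d + 1`, `f = b + d + 1`. -/
def Sol (a b d : ℕ) (p g h : k[X]) : Prop :=
  p.natDegree ≤ d ∧ g.natDegree ≤ b ∧ h.natDegree ≤ a ∧
    p = X ^ (a + d + 1) * g + (1 - X) ^ (b + d + 1) * h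

lemma psi_structure {a b d : ℕ} {p g h : k[X]} (hs : Sol a b d p g h) :
    ∃ c : k, derivative^[d + 1] (X ^ (a + d + 1) * g)
        = C c * (X ^ a * (X - C 1) ^ b) ∧ (c = 0 → p = 0) := by
  obtain ⟨hp, hg, hh, heq⟩ := hs
  set Φ : k[X] := X ^ (a + d + 1) * g with hΦ
  set ψ : k[X] := derivative^[d + 1] Φ with hψ
  have hΦdeg : Φ.natDegree ≤ a + b + d + 1 := by
    calc Φ.natDegree ≤ (X ^ (a+d+1) : k[X]).natDegree + g.natDegree := natDegree_mul_le
    _ ≤ (a + d + 1) + b := by rw [natDegree_X_pow]; omega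
    _ ≤ a + b + d + 1 := by omega
  have hψdeg : ψ.natDegree ≤ a + b := by
    calc ψ.natDegree ≤ Φ.natDegree - (d+1) := natDegree_iterate_derivative _ _
    _ ≤ a + b := by omega
  have hdvd0 : (X : k[X]) ^ a ∣ ψ := by
    have : ((X : k[X]) - C 0) ^ (a + d + 1 - (d+1)) ∣ ψ :=
      pow_sub_dvd_iterate_derivative 0 Φ _ _ (by simp [hΦ, dvd_mul_right])
    simpa using this
  have hdvd1 : ((X : k[X]) - C 1) ^ b ∣ ψ := by
    have hΦeq : Φ = p - (1 - X) ^ (b + d + 1) * h := by rw [heq]; ring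
    have hdp : derivative^[d+1] p = 0 :=
      iterate_derivative_eq_zero (by omega : p.natDegree < d + 1)
    have h1 : ((X:k[X]) - C 1) ^ (b + d + 1 - (d + 1)) ∣
        derivative^[d+1] ((1 - X) ^ (b + d + 1) * h) :=
      pow_sub_dvd_iterate_derivative 1 _ _ _ (X_sub_C_pow_dvd_one_sub_X_pow_mul _ h)
    have hb : b + d + 1 - (d + 1) = b := by omega
    rw [hb] at h1
    have : ψ = derivative^[d+1] p - derivative^[d+1] ((1 - X) ^ (b + d + 1) * h) := by
      rw [hψ, hΦeq]; exact Polynomial.iterate_derivative_sub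
    rw [this, hdp, zero_sub]
    exact Dvd.dvd.neg_right h1
  have hcop : IsCoprime ((X : k[X]) ^ a) ((X - C 1) ^ b) :=
    IsCoprime.pow ⟨1, -1, by simp only [C_1]; ring⟩
  obtain ⟨Q, hQ⟩ := hcop.mul_dvd hdvd0 hdvd1
  have hprodne : (X : k[X]) ^ a * (X - C 1) ^ b ≠ 0 :=
    ((monic_X_pow a).mul ((monic_X_sub_C (1:k)).pow b)).ne_zero
  have hproddeg : ((X : k[X]) ^ a * (X - C 1) ^ b).natDegree = a + b := by
    rw [natDegree_mul (pow_ne_zero _ X_ne_zero) (pow_ne_zero _ (X_sub_C_ne_zero (1:k))),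
      natDegree_X_pow, (monic_X_sub_C (1:k)).natDegree_pow, natDegree_X_sub_C, mul_one]
  have hzero_imp : ψ = 0 → p = 0 := by
    intro h0
    have hg0 : g = 0 := by
      by_contra hgne
      have h1 : Φ.natDegree ≤ d := natDegree_le_of_iterate_derivative_eq_zero Φ d (by rw [← hψ, h0])
      rw [hΦ, natDegree_mul (pow_ne_zero _ X_ne_zero) hgne, natDegree_X_pow] at h1
      omega
    have hpeq : p = (1 - X) ^ (b + d + 1) * h := by rw [heq, hΦ, hg0]; ring
    have hh0 : h = 0 := by
      by_contra hhne
      have h2 : p.natDegree = (b + d + 1) + h.natDegree := by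
        rw [hpeq, natDegree_mul (one_sub_X_pow_ne_zero _) hhne, natDegree_one_sub_X_pow]
      omega
    rw [hpeq, hh0, mul_zero]
  rcases eq_or_ne ψ 0 with h0 | hne
  · exact ⟨0, by rw [h0, map_zero, zero_mul], fun _ => hzero_imp h0⟩
  · have hQdeg : Q.natDegree = 0 := by
      have hQne : Q ≠ 0 := by rintro rfl; rw [mul_zero] at hQ; exact hne hQ
      have h3 : ψ.natDegree = (a + b) + Q.natDegree := by
        rw [hQ, natDegree_mul hprodne hQne, hproddeg]
      omega
    obtain ⟨c, hc⟩ := natDegree_eq_zero.mp hQdeg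
    refine ⟨c, by rw [hQ, ← hc]; ring, ?_⟩
    intro hc0
    exact absurd (by rw [hQ, ← hc, hc0, map_zero, mul_zero]) hne

lemma sol_unique {a b d : ℕ} {p₁ g₁ h₁ p₂ g₂ h₂ : k[X]}
    (hs₁ : Sol a b d p₁ g₁ h₁) (hs₂ : Sol a b d p₂ g₂ h₂) (hp₁ : p₁ ≠ 0) :
    ∃ c : k, p₂ = C c * p₁ := by
  obtain ⟨c₁, hc₁, hc₁0⟩ := psi_structure hs₁
  obtain ⟨c₂, hc₂, _⟩ := psi_structure hs₂
  have hc₁ne : c₁ ≠ 0 := fun h => hp₁ (hc₁0 h)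
  -- D := C c₂ * (X^(a+d+1) g₁) - C c₁ * (X^(a+d+1) g₂) has vanishing (d+1)-st derivative
  have hD : derivative^[d+1] (C c₂ * (X ^ (a+d+1) * g₁) - C c₁ * (X ^ (a+d+1) * g₂)) = 0 := by
    rw [Polynomial.iterate_derivative_sub, iterate_derivative_C_mul, iterate_derivative_C_mul,
      hc₁, hc₂]
    ring
  have hgeq : C c₂ * g₁ = C c₁ * g₂ := by
    by_contra hne
    have hne' : C c₂ * g₁ - C c₁ * g₂ ≠ 0 := sub_ne_zero.mpr hne
    have hDdeg : (C c₂ * (X ^ (a+d+1) * g₁) - C c₁ * (X ^ (a+d+1) * g₂)).natDegree ≤ d :=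
      natDegree_le_of_iterate_derivative_eq_zero _ _ hD
    have heqD : C c₂ * (X ^ (a+d+1) * g₁) - C c₁ * (X ^ (a+d+1) * g₂)
        = X ^ (a+d+1) * (C c₂ * g₁ - C c₁ * g₂) := by ring
    rw [heqD, natDegree_mul (pow_ne_zero _ X_ne_zero) hne', natDegree_X_pow] at hDdeg
    omega
  obtain ⟨hp1d, hg1d, hh1d, he1⟩ := hs₁
  obtain ⟨hp2d, hg2d, hh2d, he2⟩ := hs₂
  have hkey : C c₂ * p₁ - C c₁ * p₂ = (1 - X) ^ (b+d+1) * (C c₂ * h₁ - C c₁ * h₂) := by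
    rw [he1, he2]
    have : C c₂ * (X ^ (a + d + 1) * g₁) = C c₁ * (X ^ (a + d + 1) * g₂) := by
      calc C c₂ * (X ^ (a + d + 1) * g₁) = X ^ (a+d+1) * (C c₂ * g₁) := by ring
      _ = X ^ (a+d+1) * (C c₁ * g₂) := by rw [hgeq]
      _ = C c₁ * (X ^ (a + d + 1) * g₂) := by ring
    calc C c₂ * (X ^ (a + d + 1) * g₁ + (1 - X) ^ (b + d + 1) * h₁)
          - C c₁ * (X ^ (a + d + 1) * g₂ + (1 - X) ^ (b + d + 1) * h₂)
        = (C c₂ * (X ^ (a + d + 1) * g₁) - C c₁ * (X ^ (a + d + 1) * g₂))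
          + (1 - X) ^ (b+d+1) * (C c₂ * h₁ - C c₁ * h₂) := by ring
    _ = (1 - X) ^ (b+d+1) * (C c₂ * h₁ - C c₁ * h₂) := by rw [this]; ring
  have hpp : C c₂ * p₁ = C c₁ * p₂ := by
    by_contra hne
    have hne' : C c₂ * h₁ - C c₁ * h₂ ≠ 0 := by
      intro h0
      rw [h0, mul_zero, sub_eq_zero] at hkey
      exact hne hkey
    have hdeg1 : (C c₂ * p₁ - C c₁ * p₂).natDegree ≤ d :=
      le_trans (natDegree_sub_le _ _)
        (max_le (le_trans (natDegree_C_mul_le _ _) hp1d)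
          (le_trans (natDegree_C_mul_le _ _) hp2d))
    rw [hkey, natDegree_mul (one_sub_X_pow_ne_zero _) hne', natDegree_one_sub_X_pow] at hdeg1
    omega
  refine ⟨c₁⁻¹ * c₂, ?_⟩
  have h2 : C c₁⁻¹ * (C c₂ * p₁) = C c₁⁻¹ * (C c₁ * p₂) := by rw [hpp]
  rw [← mul_assoc, ← mul_assoc, ← map_mul, ← map_mul, inv_mul_cancel₀ hc₁ne, map_one,
    one_mul] at h2
  exact h2.symm

lemma sol_exists (a b d : ℕ) :
    ∃ p g h : k[X], Sol a b d p g h ∧ p ≠ 0 := by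
  set ψ : k[X] := X ^ a * (X - C 1) ^ b with hψdef
  have hψmonic : ψ.Monic := (monic_X_pow a).mul ((monic_X_sub_C (1:k)).pow b)
  have hψdeg : ψ.natDegree = a + b := by
    rw [hψdef, natDegree_mul (pow_ne_zero _ X_ne_zero)
      (pow_ne_zero _ (X_sub_C_ne_zero (1:k))),
      natDegree_X_pow, (monic_X_sub_C (1:k)).natDegree_pow, natDegree_X_sub_C, mul_one]
  set Φ : k[X] := ∑ j ∈ Finset.range (a+b+1),
      C (ψ.coeff j / ((j+d+1).descFactorial (d+1) : k)) * X ^ (j+d+1) with hΦdef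
  have hD : ∀ j : ℕ, (((j+d+1).descFactorial (d+1) : k)) ≠ 0 := by
    intro j
    have : (j+d+1).descFactorial (d+1) ≠ 0 := by
      rw [Ne, Nat.descFactorial_eq_zero_iff_lt]; omega
    exact_mod_cast this
  have hder : derivative^[d+1] Φ = ψ := by
    have hlin : ∀ q : k[X], derivative^[d+1] q
        = (((derivative : k[X] →ₗ[k] k[X]) ^ (d+1)) q) := by
      intro q; rw [Module.End.pow_apply]
    rw [hΦdef, hlin, map_sum]
    have hterm : ∀ j ∈ Finset.range (a+b+1),
        ((derivative : k[X] →ₗ[k] k[X]) ^ (d+1))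
          (C (ψ.coeff j / ((j+d+1).descFactorial (d+1) : k)) * X ^ (j+d+1))
        = C (ψ.coeff j) * X ^ j := by
      intro j _
      rw [← hlin, iterate_derivative_C_mul, iterate_derivative_X_pow_eq_C_mul,
        ← mul_assoc, ← map_mul, div_mul_cancel₀ _ (hD j)]
      congr 2
      omega
    rw [Finset.sum_congr rfl hterm]
    have h5 : ψ = ∑ j ∈ Finset.range (a+b+1), (monomial j) (ψ.coeff j) :=
      as_sum_range' ψ (a+b+1) (by omega)
    simp only [C_mul_X_pow_eq_monomial]
    exact h5.symm
  have hΦdvd : (X : k[X]) ^ (a+d+1) ∣ Φ := by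
    rw [hΦdef]
    apply Finset.dvd_sum
    intro j _
    rcases lt_or_ge j a with hj | hj
    · have : ψ.coeff j = 0 :=
        X_pow_dvd_iff.mp (by rw [hψdef]; exact dvd_mul_right _ _) j hj
      rw [this, zero_div, map_zero, zero_mul]
      exact dvd_zero _
    · exact Dvd.dvd.mul_left (pow_dvd_pow _ (by omega)) _
  have hΦdeg : Φ.natDegree ≤ a+b+d+1 := by
    rw [hΦdef]
    apply natDegree_sum_le_of_forall_le
    intro j hj
    refine le_trans (natDegree_C_mul_le _ _) ?_
    rw [natDegree_X_pow]
    simp only [Finset.mem_range] at hj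
    omega
  obtain ⟨g, hg⟩ := hΦdvd
  have hΦne : Φ ≠ 0 := by
    intro h0
    have : ψ = 0 := by rw [← hder, h0]; simp
    exact hψmonic.ne_zero this
  have hgne : g ≠ 0 := by rintro rfl; rw [mul_zero] at hg; exact hΦne hg
  have hgdeg : g.natDegree ≤ b := by
    have := natDegree_mul (pow_ne_zero (a+d+1) (X_ne_zero (R := k))) hgne
    rw [← hg, natDegree_X_pow] at this
    omega
  set M : k[X] := (X - C 1) ^ (b+d+1) with hMdef
  have hMmonic : M.Monic := (monic_X_sub_C (1:k)).pow _
  have hMdeg : M.natDegree = b+d+1 := by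
    rw [hMdef, (monic_X_sub_C (1:k)).natDegree_pow, natDegree_X_sub_C, mul_one]
  set p : k[X] := Φ %ₘ M with hpdef
  set v : k[X] := Φ /ₘ M with hvdef
  have hsplit : Φ = p + M * v := by
    rw [hpdef, hvdef]; exact (modByMonic_add_div Φ M).symm
  have hvdeg : v.natDegree ≤ a := by
    rw [hvdef, natDegree_divByMonic Φ hMmonic, hMdeg]
    omega
  have hpMdeg : p.natDegree ≤ b + d := by
    have hM1 : M ≠ 1 := by
      intro h1; rw [h1, natDegree_one] at hMdeg; omega
    have h6 := natDegree_modByMonic_lt Φ hMmonic hM1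
    rw [hMdeg, ← hpdef] at h6
    omega
  have hpdeg : p.natDegree ≤ d := by
    rcases Nat.eq_zero_or_pos b with hb0 | hbpos
    · omega
    · apply natDegree_le_of_iterate_derivative_eq_zero
      by_contra hrne
      set r : k[X] := derivative^[d+1] p with hrdef
      have hrdvd : ((X:k[X]) - C 1) ^ b ∣ r := by
        have h1 : r = derivative^[d+1] Φ - derivative^[d+1] (M * v) := by
          rw [hrdef, ← Polynomial.iterate_derivative_sub]
          congr 1
          rw [hsplit]; ring
        have h2 : ((X:k[X]) - C 1) ^ b ∣ derivative^[d+1] (M * v) := by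
          have := pow_sub_dvd_iterate_derivative 1 (M * v) (b+d+1) (d+1)
            (by rw [hMdef]; exact dvd_mul_right _ _)
          have hbb : b + d + 1 - (d+1) = b := by omega
          rwa [hbb] at this
        rw [h1, hder]
        exact dvd_sub (Dvd.intro_left _ rfl) h2
      have hrdeg : r.natDegree ≤ b + d - (d+1) := by
        calc r.natDegree ≤ p.natDegree - (d+1) := natDegree_iterate_derivative _ _
        _ ≤ b + d - (d+1) := by omega
      have := natDegree_le_of_dvd hrdvd hrne
      rw [(monic_X_sub_C (1:k)).natDegree_pow, natDegree_X_sub_C, mul_one] at this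
      omega
  -- assemble
  set h : k[X] := C ((-1:k) ^ (b+d+1+1)) * v with hhdef
  have hhdeg : h.natDegree ≤ a := le_trans (natDegree_C_mul_le _ _) hvdeg
  have hsol : p = X ^ (a+d+1) * g + (1 - X) ^ (b+d+1) * h := by
    have hsign : ((1:k[X]) - X) ^ (b+d+1) * h = - (M * v) := by
      rw [hhdef, one_sub_X_pow_eq, hMdef]
      have : ((-1:k) ^ (b+d+1)) * ((-1:k) ^ (b+d+1+1)) = -1 := by
        rw [← pow_add]
        have : b+d+1 + (b+d+1+1) = 2*(b+d+1) + 1 := by omega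
        rw [this, pow_succ, pow_mul]
        norm_num
      calc C ((-1:k) ^ (b+d+1)) * (X - C 1) ^ (b+d+1) * (C ((-1:k) ^ (b+d+1+1)) * v)
          = C (((-1:k) ^ (b+d+1)) * ((-1:k) ^ (b+d+1+1))) * ((X - C 1) ^ (b+d+1) * v) := by
            rw [map_mul]; ring
        _ = - ((X - C 1) ^ (b+d+1) * v) := by rw [this]; simp
    rw [hsign, ← hg]
    rw [hsplit]; ring
  have hpne : p ≠ 0 := by
    intro hp0
    have hXg : X ^ (a+d+1) * g = M * v := by
      have h7 := hsplit
      rw [hp0, zero_add, hg] at h7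
      exact h7
    have hcop : IsCoprime ((X:k[X]) ^ (a+d+1)) M := by
      rw [hMdef]
      exact IsCoprime.pow ⟨1, -1, by simp only [C_1]; ring⟩
    have hdvdv : (X:k[X]) ^ (a+d+1) ∣ v :=
      hcop.dvd_of_dvd_mul_left (by rw [← hXg]; exact dvd_mul_right _ _)
    have hv0 : v = 0 := by
      by_contra hvne
      have := natDegree_le_of_dvd hdvdv hvne
      rw [natDegree_X_pow] at this
      omega
    rw [hv0, mul_zero] at hXg
    have : g = 0 := by
      rcases mul_eq_zero.mp hXg with h1 | h2
      · exact absurd h1 (pow_ne_zero _ X_ne_zero)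
      · exact h2
    exact hgne this
  exact ⟨p, g, h, ⟨hpdeg, hgdeg, hhdeg, hsol⟩, hpne⟩


end Univariate

section Bivariate
open MvPolynomial
variable {k : Type*} [Field k] [CharZero k]



noncomputable def phi : MvPolynomial (Fin 2) k →ₐ[k] Polynomial k :=
  aeval ![Polynomial.X, 1 - Polynomial.X]

lemma deg2 (m : Fin 2 →₀ ℕ) : m.degree = m 0 + m 1 := by
  rw [Finsupp.degree, ← Fin.sum_univ_two (f := fun i => m i)]
  exact Finset.sum_subset (Finset.subset_univ _)
    (fun i _ hi => Finsupp.notMem_support_iff.mp hi)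

lemma isHom_degree {w : MvPolynomial (Fin 2) k} {d : ℕ} (hw : w.IsHomogeneous d)
    {m : Fin 2 →₀ ℕ} (hm : m ∈ w.support) : m 0 + m 1 = d := by
  rw [← deg2]
  have := hw (MvPolynomial.mem_support_iff.mp hm)
  rw [Finsupp.degree_eq_weight_one]; exact this

/-- evaluation of `phi` at a point. -/
lemma eval_phi (t : k) (w : MvPolynomial (Fin 2) k) :
    Polynomial.eval t (phi w) = eval ![t, 1 - t] w := by
  have h : (Polynomial.aeval t).comp (phi (k := k)) = aeval ![t, 1 - t] := by
    apply algHom_ext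
    intro i
    fin_cases i <;> simp [phi]
  have h2 := congrFun (congrArg (fun F => F.toFun) h) w
  simp only [AlgHom.toFun_eq_coe, AlgHom.coe_comp, Function.comp_apply] at h2
  rw [← Polynomial.coe_aeval_eq_eval]
  show (Polynomial.aeval t) (phi w) = _
  rw [h2, aeval_eq_eval₂Hom, Algebra.algebraMap_self]
  rfl

/-- homogeneous scaling under evaluation -/
lemma eval_smul_isHom {w : MvPolynomial (Fin 2) k} {d : ℕ} (hw : w.IsHomogeneous d)
    (s : k) (x : Fin 2 → k) : eval (s • x) w = s ^ d * eval x w := by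
  rw [eval_eq' (s • x) w, eval_eq' x w, Finset.mul_sum]
  apply Finset.sum_congr rfl
  intro m hm
  have hd := isHom_degree hw hm
  simp only [Pi.smul_apply, smul_eq_mul]
  rw [Fin.prod_univ_two, Fin.prod_univ_two, mul_pow, mul_pow]
  calc w.coeff m * (s ^ m 0 * x 0 ^ m 0 * (s ^ m 1 * x 1 ^ m 1))
      = s ^ (m 0 + m 1) * (w.coeff m * (x 0 ^ m 0 * x 1 ^ m 1)) := by
        rw [pow_add]; ring
  _ = s ^ d * (w.coeff m * (x 0 ^ m 0 * x 1 ^ m 1)) := by rw [hd]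

/-- Injectivity of `phi` on homogeneous polynomials. -/
lemma phi_inj {w : MvPolynomial (Fin 2) k} {d : ℕ} (hw : w.IsHomogeneous d)
    (h : phi w = 0) : w = 0 := by
  have hall : ∀ x : Fin 2 → k, eval x ((X 0 + X 1) * w) = 0 := by
    intro x
    rcases eq_or_ne (x 0 + x 1) 0 with hs | hs
    · rw [map_mul]
      simp [hs]
    · rw [map_mul]
      apply mul_eq_zero_of_right
      set t : k := x 0 / (x 0 + x 1) with ht
      have hx : x = (x 0 + x 1) • ![t, 1 - t] := by
        funext i
        fin_cases i <;> simp [ht] <;> field_simp <;> ring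
      rw [hx, eval_smul_isHom hw]
      have := eval_phi (k := k) t w
      rw [h] at this
      simp only [Polynomial.eval_zero] at this
      rw [← this, mul_zero]
  have hfun : (X 0 + X 1) * w = 0 := by
    apply MvPolynomial.funext
    intro x
    rw [hall x, map_zero]
  have hX : (X 0 + X 1 : MvPolynomial (Fin 2) k) ≠ 0 := by
    intro h0
    have := congrArg (coeff (Finsupp.single 0 1)) h0
    simp [coeff_add, coeff_X', Finsupp.single_eq_single_iff] at this
  rcases mul_eq_zero.mp hfun with h1 | h2
  · exact absurd h1 hX
  · exact h2

/-- Degree bound for `phi` of a homogeneous polynomial. -/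
lemma phi_natDegree_le {w : MvPolynomial (Fin 2) k} {d : ℕ} (hw : w.IsHomogeneous d) :
    (phi w).natDegree ≤ d := by
  conv_lhs => rw [w.as_sum]
  rw [map_sum]
  apply Polynomial.natDegree_sum_le_of_forall_le
  intro m hm
  rw [phi, aeval_monomial]
  have hd := isHom_degree hw hm
  refine le_trans (Polynomial.natDegree_mul_le) ?_
  have h1 : (algebraMap k (Polynomial k) (coeff m w)).natDegree = 0 :=
    Polynomial.natDegree_C _
  rw [h1, zero_add]
  have h2 : (Finsupp.prod m fun n e => ((![Polynomial.X, 1 - Polynomial.X] : Fin 2 → Polynomial k) n) ^ e)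
      = ∏ i : Fin 2, ((![Polynomial.X, 1 - Polynomial.X] : Fin 2 → Polynomial k) i) ^ m i :=
    Finsupp.prod_fintype _ _ (fun i => pow_zero _)
  rw [h2, Fin.prod_univ_two]
  refine le_trans Polynomial.natDegree_mul_le ?_
  have h3 : (((![Polynomial.X, 1 - Polynomial.X] : Fin 2 → Polynomial k) 0) ^ m 0).natDegree ≤ m 0 := by
    show ((Polynomial.X : Polynomial k) ^ m 0).natDegree ≤ m 0
    simp [Polynomial.natDegree_X_pow]
  have h4 : (((![Polynomial.X, 1 - Polynomial.X] : Fin 2 → Polynomial k) 1) ^ m 1).natDegree ≤ m 1 := by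
    show ((1 - Polynomial.X : Polynomial k) ^ m 1).natDegree ≤ m 1
    have hone : ((1:Polynomial k) - Polynomial.X).natDegree = 1 := by
      rw [← neg_sub Polynomial.X (1 : Polynomial k), Polynomial.natDegree_neg,
        ← Polynomial.C_1, Polynomial.natDegree_X_sub_C]
    refine le_trans Polynomial.natDegree_pow_le ?_
    rw [hone, mul_one]
  omega




lemma hc_of_isHom {q : MvPolynomial (Fin 2) k} {n m : ℕ} (hq : q.IsHomogeneous n) :
    homogeneousComponent m q = if m = n then q else 0 :=
  homogeneousComponent_of_mem ((mem_homogeneousSubmodule n q).mpr hq)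

/-- homogeneous component of a product with a homogeneous factor -/
lemma hc_mul {q : MvPolynomial (Fin 2) k} {j : ℕ} (hq : q.IsHomogeneous j)
    (B : MvPolynomial (Fin 2) k) (m : ℕ) :
    homogeneousComponent m (q * B)
      = if j ≤ m then q * homogeneousComponent (m - j) B else 0 := by
  conv_lhs => rw [← B.sum_homogeneousComponent]
  rw [Finset.mul_sum, map_sum]
  have hterm : ∀ i ∈ Finset.range (B.totalDegree + 1),
      homogeneousComponent m (q * homogeneousComponent i B)
        = if m = j + i then q * homogeneousComponent i B else 0 := by
    intro i _
    exact hc_of_isHom (hq.mul (homogeneousComponent_isHomogeneous i B))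
  rw [Finset.sum_congr rfl hterm]
  rcases le_or_gt j m with hjm | hjm
  · rw [if_pos hjm]
    rw [Finset.sum_eq_single (m - j)]
    · rw [if_pos (by omega)]
    · intro i _ hne
      rw [if_neg (by omega)]
    · intro hnot
      simp only [Finset.mem_range, not_lt] at hnot
      rw [if_pos (by omega),
        homogeneousComponent_eq_zero _ B (by omega : B.totalDegree < m - j), mul_zero]
  · rw [if_neg (by omega)]
    apply Finset.sum_eq_zero
    intro i _
    rw [if_neg (by omega)]

/-- every element of the span that is homogeneous of degree `m` has a homogeneous
decomposition -/
lemma span_decompose {e f m : ℕ} (he : e ≤ m) (hf : f ≤ m)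
    {S : MvPolynomial (Fin 2) k} (hS : S.IsHomogeneous m)
    (hmem : S ∈ Ideal.span {(X 0 : MvPolynomial (Fin 2) k) ^ e, (X 1 : MvPolynomial (Fin 2) k) ^ f}) :
    ∃ G H : MvPolynomial (Fin 2) k, G.IsHomogeneous (m - e) ∧ H.IsHomogeneous (m - f) ∧
      S = X 0 ^ e * G + X 1 ^ f * H := by
  rw [Ideal.mem_span_pair] at hmem
  obtain ⟨A, B, hAB⟩ := hmem
  refine ⟨homogeneousComponent (m - e) A, homogeneousComponent (m - f) B,
    homogeneousComponent_isHomogeneous _ _, homogeneousComponent_isHomogeneous _ _, ?_⟩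
  have h1 : S = homogeneousComponent m S := by
    rw [hc_of_isHom hS, if_pos rfl]
  have h2 : homogeneousComponent m (A * X 0 ^ e + B * X 1 ^ f) = S := by rw [hAB, ← h1]
  rw [map_add] at h2
  rw [mul_comm A, mul_comm B] at h2
  rw [hc_mul ((isHomogeneous_X k 0).pow e) A m, hc_mul ((isHomogeneous_X k 1).pow f) B m,
    if_pos (by simpa using he), if_pos (by simpa using hf)] at h2
  rw [← h2]
  congr 2 <;> simp [mul_one]

/-- homogeneous elements of low degree in the span vanish -/
lemma span_low_degree {e f d : ℕ} (hd : d < e) (hdf : d < f)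
    {w : MvPolynomial (Fin 2) k} (hw : w.IsHomogeneous d)
    (hmem : w ∈ Ideal.span {(X 0 : MvPolynomial (Fin 2) k) ^ e, (X 1 : MvPolynomial (Fin 2) k) ^ f}) :
    w = 0 := by
  rw [Ideal.mem_span_pair] at hmem
  obtain ⟨A, B, hAB⟩ := hmem
  have h1 : w = homogeneousComponent d w := by rw [hc_of_isHom hw, if_pos rfl]
  rw [h1, ← hAB, map_add, mul_comm A, mul_comm B,
    hc_mul ((isHomogeneous_X k 0).pow e) A d, hc_mul ((isHomogeneous_X k 1).pow f) B d,
    if_neg (by simpa using Nat.not_le.mpr hd), if_neg (by simpa using Nat.not_le.mpr hdf),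
    add_zero]

/-- the homogenization of a univariate polynomial of degree at most `m` -/
noncomputable def homPoly (m : ℕ) (p : Polynomial k) : MvPolynomial (Fin 2) k :=
  ∑ i ∈ Finset.range (m + 1), MvPolynomial.C (p.coeff i) * X 0 ^ i * (X 0 + X 1) ^ (m - i)

lemma homPoly_isHomogeneous (m : ℕ) (p : Polynomial k) :
    (homPoly m p).IsHomogeneous m := by
  apply IsHomogeneous.sum
  intro i hi
  simp only [Finset.mem_range] at hi
  have h1 : (MvPolynomial.C (p.coeff i) * (X 0 : MvPolynomial (Fin 2) k) ^ i).IsHomogeneous i := by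
    have := (isHomogeneous_C (Fin 2) (p.coeff i)).mul ((isHomogeneous_X k 0).pow i)
    simpa using this
  have h2 : (((X 0 : MvPolynomial (Fin 2) k) + X 1) ^ (m - i)).IsHomogeneous (m - i) := by
    have := (((isHomogeneous_X k (0 : Fin 2))).add (isHomogeneous_X k 1)).pow (m - i)
    simpa using this
  have := h1.mul h2
  have him : i + (m - i) = m := by omega
  rwa [him] at this

lemma phi_homPoly {m : ℕ} {p : Polynomial k} (hp : p.natDegree ≤ m) :
    phi (homPoly m p) = p := by
  rw [phi, homPoly, map_sum]
  have hterm : ∀ i ∈ Finset.range (m+1),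
      aeval ![Polynomial.X, 1 - Polynomial.X]
        (MvPolynomial.C (p.coeff i) * X 0 ^ i * ((X 0 : MvPolynomial (Fin 2) k) + X 1) ^ (m - i))
      = Polynomial.C (p.coeff i) * Polynomial.X ^ i := by
    intro i _
    rw [map_mul, map_mul, map_pow, map_pow, map_add]
    simp only [aeval_X, aeval_C]
    have : (![Polynomial.X, 1 - Polynomial.X] : Fin 2 → Polynomial k) 0
        + (![Polynomial.X, 1 - Polynomial.X] : Fin 2 → Polynomial k) 1 = 1 := by
      simp
    rw [this, one_pow, mul_one]
    simp [Polynomial.algebraMap_eq]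
  rw [Finset.sum_congr rfl hterm]
  simp only [Polynomial.C_mul_X_pow_eq_monomial]
  exact (Polynomial.as_sum_range' p (m+1) (by omega)).symm


end Bivariate

end LefschetzAux

open MvPolynomial LefschetzAux

/-- Let `k` be a field of characteristic `0`, `e ≤ f` positive integers, and
`R = k[x,y]/(x^e, y^f)` with its standard grading.  For each `0 ≤ d ≤ e - 1` there is a
nonzero homogeneous element `w` of degree `d` of `R` with `(x+y)^(e+f-2d-1) ⬝ w = 0`, and it
is unique up to a scalar: any two homogeneous degree-`d` elements killed by
`(x+y)^(e+f-2d-1)` are proportional. -/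
theorem exists_unique_homogeneous_killed_by_pow
    (k : Type*) [Field k] [CharZero k] (e f : ℕ) (he : 0 < e) (hef : e ≤ f)
    (d : ℕ) (hd : d ≤ e - 1) :
    (∃ w : MvPolynomial (Fin 2) k, w.IsHomogeneous d ∧
        Ideal.Quotient.mk
          (Ideal.span {(X 0 : MvPolynomial (Fin 2) k) ^ e, (X 1 : MvPolynomial (Fin 2) k) ^ f})
          w ≠ 0 ∧
        Ideal.Quotient.mk
          (Ideal.span {(X 0 : MvPolynomial (Fin 2) k) ^ e, (X 1 : MvPolynomial (Fin 2) k) ^ f})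
          ((X 0 + X 1) ^ (e + f - 2 * d - 1) * w) = 0) ∧
      ∀ w₁ w₂ : MvPolynomial (Fin 2) k, w₁.IsHomogeneous d → w₂.IsHomogeneous d →
        Ideal.Quotient.mk
          (Ideal.span {(X 0 : MvPolynomial (Fin 2) k) ^ e, (X 1 : MvPolynomial (Fin 2) k) ^ f})
          ((X 0 + X 1) ^ (e + f - 2 * d - 1) * w₁) = 0 →
        Ideal.Quotient.mk
          (Ideal.span {(X 0 : MvPolynomial (Fin 2) k) ^ e, (X 1 : MvPolynomial (Fin 2) k) ^ f})
          ((X 0 + X 1) ^ (e + f - 2 * d - 1) * w₂) = 0 →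
        ∃ c : k,
          Ideal.Quotient.mk
              (Ideal.span
                {(X 0 : MvPolynomial (Fin 2) k) ^ e, (X 1 : MvPolynomial (Fin 2) k) ^ f}) w₂ =
            c • Ideal.Quotient.mk
              (Ideal.span
                {(X 0 : MvPolynomial (Fin 2) k) ^ e, (X 1 : MvPolynomial (Fin 2) k) ^ f}) w₁ ∨
          Ideal.Quotient.mk
              (Ideal.span
                {(X 0 : MvPolynomial (Fin 2) k) ^ e, (X 1 : MvPolynomial (Fin 2) k) ^ f}) w₁ =
            c • Ideal.Quotient.mk
              (Ideal.span
                {(X 0 : MvPolynomial (Fin 2) k) ^ e, (X 1 : MvPolynomial (Fin 2) k) ^ f}) w₂ := by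
  set I : Ideal (MvPolynomial (Fin 2) k) :=
    Ideal.span {(X 0 : MvPolynomial (Fin 2) k) ^ e, (X 1 : MvPolynomial (Fin 2) k) ^ f} with hI
  set a := e - d - 1 with ha
  set b := f - d - 1 with hb
  have hae : e = a + d + 1 := by omega
  have hbf : f = b + d + 1 := by omega
  set m := a + b + d + 1 with hm
  have hXXhom : ((X 0 + X 1 : MvPolynomial (Fin 2) k) ^ (e + f - 2*d - 1)).IsHomogeneous
      (e + f - 2*d - 1) := by
    have := ((isHomogeneous_X k (0 : Fin 2)).add (isHomogeneous_X k 1)).pow (e + f - 2*d - 1)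
    simpa using this
  have hphiXX : phi (k := k) ((X 0 + X 1 : MvPolynomial (Fin 2) k)) = 1 := by
    rw [phi, map_add, aeval_X, aeval_X]
    simp
  have hphiX0 : phi (k := k) (X 0 : MvPolynomial (Fin 2) k) = Polynomial.X := by
    rw [phi, aeval_X]; simp
  have hphiX1 : phi (k := k) (X 1 : MvPolynomial (Fin 2) k) = 1 - Polynomial.X := by
    rw [phi, aeval_X]; simp
  constructor
  · -- existence
    obtain ⟨p, g, h, hsol, hpne⟩ := sol_exists (k := k) a b d
    obtain ⟨hpd, hgd, hhd, heq⟩ := hsol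
    refine ⟨homPoly d p, homPoly_isHomogeneous d p, ?_, ?_⟩
    · intro h0
      have hmem := Ideal.Quotient.eq_zero_iff_mem.mp h0
      have hW0 : homPoly d p = 0 :=
        span_low_degree (by omega) (by omega) (homPoly_isHomogeneous d p) hmem
      have : p = 0 := by
        have h4 := phi_homPoly (k := k) hpd
        rw [hW0] at h4
        rw [← h4]
        exact map_zero _
      exact hpne this
    · have hkey : (X 0 + X 1 : MvPolynomial (Fin 2) k) ^ (e + f - 2*d - 1) * homPoly d p
          = X 0 ^ e * homPoly b g + X 1 ^ f * homPoly a h := by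
        have hLhom : ((X 0 + X 1 : MvPolynomial (Fin 2) k) ^ (e + f - 2*d - 1)
            * homPoly d p).IsHomogeneous m := by
          have := hXXhom.mul (homPoly_isHomogeneous d p)
          rwa [show (e + f - 2*d - 1) + d = m by omega] at this
        have hRhom : ((X 0 : MvPolynomial (Fin 2) k) ^ e * homPoly b g
            + (X 1 : MvPolynomial (Fin 2) k) ^ f * homPoly a h).IsHomogeneous m := by
          have h1 := ((isHomogeneous_X k (0:Fin 2)).pow e).mul (homPoly_isHomogeneous b g)
          have h2 := ((isHomogeneous_X k (1:Fin 2)).pow f).mul (homPoly_isHomogeneous a h)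
          rw [show 1 * e + b = m by omega] at h1
          rw [show 1 * f + a = m by omega] at h2
          exact h1.add h2
        have hphiL : phi (k := k) ((X 0 + X 1 : MvPolynomial (Fin 2) k) ^ (e + f - 2*d - 1)
            * homPoly d p) = p := by
          rw [map_mul, map_pow, hphiXX, one_pow, one_mul]
          exact phi_homPoly hpd
        have hphiR : phi (k := k) ((X 0 : MvPolynomial (Fin 2) k) ^ e * homPoly b g
            + (X 1 : MvPolynomial (Fin 2) k) ^ f * homPoly a h) = p := by
          rw [map_add, map_mul, map_mul, map_pow, map_pow, hphiX0, hphiX1,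
            phi_homPoly hgd, phi_homPoly hhd]
          rw [hae, hbf] at *
          exact heq.symm
        have hdiff := phi_inj (hLhom.sub hRhom)
          (by rw [map_sub, hphiL, hphiR, sub_self])
        exact sub_eq_zero.mp hdiff
      rw [hkey]
      apply Ideal.Quotient.eq_zero_iff_mem.mpr
      apply Ideal.add_mem
      · exact Ideal.mul_mem_right _ _ (Ideal.subset_span (Set.mem_insert _ _))
      · exact Ideal.mul_mem_right _ _ (Ideal.subset_span (Set.mem_insert_of_mem _ rfl))
  · -- uniqueness
    intro w₁ w₂ hw₁ hw₂ hk₁ hk₂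
    by_cases h10 : Ideal.Quotient.mk I w₁ = 0
    · exact ⟨0, Or.inr (by rw [h10, zero_smul])⟩
    by_cases h20 : Ideal.Quotient.mk I w₂ = 0
    · exact ⟨0, Or.inl (by rw [h20, zero_smul])⟩
    have getsol : ∀ w : MvPolynomial (Fin 2) k, w.IsHomogeneous d →
        Ideal.Quotient.mk I ((X 0 + X 1) ^ (e + f - 2 * d - 1) * w) = 0 →
        ∃ g' h' : Polynomial k, LefschetzAux.Sol a b d (phi (k := k) w) g' h' := by
      intro w hw hkw
      have hmem := Ideal.Quotient.eq_zero_iff_mem.mp hkw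
      have hShom : (((X 0 + X 1 : MvPolynomial (Fin 2) k)) ^ (e + f - 2*d - 1)
          * w).IsHomogeneous m := by
        have := hXXhom.mul hw
        rwa [show (e + f - 2*d - 1) + d = m by omega] at this
      obtain ⟨G, H, hG, hH, hSeq⟩ :=
        span_decompose (by omega : e ≤ m) (by omega : f ≤ m) hShom hmem
      refine ⟨phi (k := k) G, phi (k := k) H, phi_natDegree_le hw, ?_, ?_, ?_⟩
      · have := phi_natDegree_le hG
        rwa [show m - e = b by omega] at this
      · have := phi_natDegree_le hH
        rwa [show m - f = a by omega] at this
      · have h6 := congrArg (phi (k := k)) hSeq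
        rw [map_mul, map_pow, hphiXX, one_pow, one_mul, map_add, map_mul, map_mul,
          map_pow, map_pow, hphiX0, hphiX1] at h6
        rw [h6, hae, hbf]
    obtain ⟨g₁, h₁, hs₁⟩ := getsol w₁ hw₁ hk₁
    obtain ⟨g₂, h₂, hs₂⟩ := getsol w₂ hw₂ hk₂
    have hp1ne : phi (k := k) w₁ ≠ 0 := by
      intro h0
      exact h10 (by rw [phi_inj hw₁ h0, map_zero])
    obtain ⟨c, hc⟩ := sol_unique hs₁ hs₂ hp1ne
    have hw2eq : w₂ = c • w₁ := by
      have hsmulhom : (c • w₁ : MvPolynomial (Fin 2) k).IsHomogeneous d := by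
        have := Submodule.smul_mem (homogeneousSubmodule (Fin 2) k d) c
          ((mem_homogeneousSubmodule d w₁).mpr hw₁)
        exact (mem_homogeneousSubmodule d _).mp this
      have hphi0 : phi (k := k) (w₂ - c • w₁) = 0 := by
        rw [map_sub, map_smul, hc, Polynomial.smul_eq_C_mul, sub_self]
      have := phi_inj (hw₂.sub hsmulhom) hphi0
      exact sub_eq_zero.mp this
    refine ⟨c, Or.inl ?_⟩
    rw [hw2eq, ← Ideal.Quotient.mkₐ_eq_mk (R₁ := k) I, map_smul]
end

section
/- Let e, f, d be integers with 1 ≤ e ≤ f and 0 ≤ d ≤ e − 1. The (d+1) × (d+1) matrix over ℚ whose (i, j) entry, for 0 ≤ i, j ≤ d, is the binomial coefficient C(e+f−2d−2, e−d−1−i+j) (interpreted as 0 when the lower index is negative or exceeds e+f−2d−2) has nonzero determinant. -/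
open Polynomial

lemma few_terms_aux : ∀ (N : ℕ) (p : ℚ[X]), p.natDegree ≤ N → p ≠ 0 →
    ∀ n : ℕ, (X + 1) ^ n ∣ p → n < p.support.card := by
  intro N
  induction N with
  | zero =>
    intro p hdeg hp n hdvd
    rcases n with _ | m
    · simpa [Finset.card_pos] using (Polynomial.support_nonempty).2 hp
    · exfalso
      have h1 : ((X + 1 : ℚ[X]) ^ (m + 1)).natDegree ≤ p.natDegree :=
        Polynomial.natDegree_le_of_dvd hdvd hp
      have h2 : ((X + 1 : ℚ[X]) ^ (m + 1)).natDegree = m + 1 := by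
        rw [show ((X + 1 : ℚ[X])) = X + C 1 by simp, Polynomial.natDegree_pow,
          Polynomial.natDegree_X_add_C, mul_one]
      omega
  | succ N ih =>
    intro p hdeg hp n hdvd
    rcases n with _ | m
    · simpa [Finset.card_pos] using (Polynomial.support_nonempty).2 hp
    have hdegp : m + 1 ≤ p.natDegree := by
      have h1 : ((X + 1 : ℚ[X]) ^ (m + 1)).natDegree ≤ p.natDegree :=
        Polynomial.natDegree_le_of_dvd hdvd hp
      have h2 : ((X + 1 : ℚ[X]) ^ (m + 1)).natDegree = m + 1 := by
        rw [show ((X + 1 : ℚ[X])) = X + C 1 by simp, Polynomial.natDegree_pow,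
          Polynomial.natDegree_X_add_C, mul_one]
      omega
    by_cases h0 : p.coeff 0 = 0
    · -- strip a factor of X
      obtain ⟨q, rfl⟩ : X ∣ p := Polynomial.X_dvd_iff.2 h0
      have hq : q ≠ 0 := fun h => hp (by simp [h])
      have hcop : IsCoprime ((X + 1 : ℚ[X]) ^ (m + 1)) X := by
        apply IsCoprime.pow_left
        exact ⟨1, -1, by ring⟩
      have hdvd' : (X + 1 : ℚ[X]) ^ (m + 1) ∣ q := hcop.dvd_of_dvd_mul_left hdvd
      have hdq : q.natDegree ≤ N := by
        have : (X * q).natDegree = 1 + q.natDegree := by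
          rw [Polynomial.natDegree_mul Polynomial.X_ne_zero hq, Polynomial.natDegree_X]
        omega
      have hcard : (X * q).support.card = q.support.card := by
        have : (X * q).support = q.support.map ⟨fun i => i + 1, add_left_injective 1⟩ := by
          ext i
          simp only [Polynomial.mem_support_iff, Finset.mem_map, Function.Embedding.coeFn_mk]
          constructor
          · intro hi
            rcases i with _ | i
            · exact absurd (by simp [Polynomial.mul_coeff_zero]) hi
            · exact ⟨i, by simpa [Polynomial.coeff_X_mul] using hi, rfl⟩
          · rintro ⟨a, ha, rfl⟩
            simpa [Polynomial.coeff_X_mul] using ha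
        rw [this, Finset.card_map]
      rw [hcard]
      exact ih q hdq hq (m + 1) hdvd'
    · -- use the derivative
      have hd0 : p.natDegree ≠ 0 := by omega
      have hder_ne : Polynomial.derivative p ≠ 0 := by
        intro h
        exact hd0 (Polynomial.natDegree_eq_zero_of_derivative_eq_zero h)
      have hderdvd : (X + 1 : ℚ[X]) ^ m ∣ Polynomial.derivative p := by
        obtain ⟨r, rfl⟩ := hdvd
        have key : Polynomial.derivative ((X + 1 : ℚ[X]) ^ (m + 1) * r) =
            (X + 1) ^ m * (C ((m + 1 : ℕ) : ℚ) * r + (X + 1) * Polynomial.derivative r) := by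
          rw [Polynomial.derivative_mul, Polynomial.derivative_pow]
          simp only [Polynomial.derivative_add, Polynomial.derivative_X,
            Polynomial.derivative_one, add_zero, mul_one, Nat.add_sub_cancel]
          ring
        exact ⟨_, key⟩
      have hdd : (Polynomial.derivative p).natDegree ≤ N := by
        have := Polynomial.natDegree_derivative_lt hd0
        omega
      have hmain := ih _ hdd hder_ne m hderdvd
      -- card of derivative support + 1 ≤ card of p's support
      have hsub : insert 0 ((Polynomial.derivative p).support.map
          ⟨fun i => i + 1, add_left_injective 1⟩) ⊆ p.support := by
        intro i hi
        simp only [Finset.mem_insert, Finset.mem_map, Function.Embedding.coeFn_mk] at hi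
        rcases hi with rfl | ⟨a, ha, rfl⟩
        · exact Polynomial.mem_support_iff.2 h0
        · exact Polynomial.of_mem_support_derivative ha
      have hcard := Finset.card_le_card hsub
      rw [Finset.card_insert_of_notMem (by simp), Finset.card_map] at hcard
      omega

lemma few_terms (p : ℚ[X]) (hp : p ≠ 0) (n : ℕ) (hdvd : (X + 1) ^ n ∣ p) :
    n < p.support.card :=
  few_terms_aux p.natDegree p le_rfl hp n hdvd


/-- Let `1 ≤ e ≤ f` and `0 ≤ d ≤ e - 1`.  The `(d+1) × (d+1)` matrix over `ℚ` whose
`(i, j)` entry is the binomial coefficient `C(e+f-2d-2, e-d-1-i+j)` (interpreted as `0`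
when the lower index is negative or exceeds `e+f-2d-2`) has nonzero determinant. -/
theorem binomial_matrix_det_ne_zero (e f d : ℕ) (he : 1 ≤ e) (hef : e ≤ f) (hd : d ≤ e - 1) :
    (Matrix.of fun i j : Fin (d + 1) =>
        if h : (0 : ℤ) ≤ (e : ℤ) - d - 1 - (i : ℤ) + (j : ℤ) then
          ((e + f - 2 * d - 2).choose ((e : ℤ) - d - 1 - (i : ℤ) + (j : ℤ)).toNat : ℚ)
        else 0).det ≠ 0 := by
  intro hdet
  set n : ℕ := e + f - 2 * d - 2 with hn
  set k : ℕ := e - d - 1 with hk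
  have hde : d + 1 ≤ e := by omega
  have hkn : k ≤ n := by omega
  obtain ⟨v, hv, hmv⟩ := Matrix.exists_mulVec_eq_zero_iff.2 hdet
  -- the polynomial Q and R
  set Q : ℚ[X] := ∑ j : Fin (d + 1), C (v j) * X ^ (d - (j : ℕ)) with hQ
  have hQcoeff : ∀ j₀ : Fin (d + 1), Q.coeff (d - (j₀ : ℕ)) = v j₀ := by
    intro j₀
    rw [hQ, Polynomial.finset_sum_coeff]
    rw [Finset.sum_eq_single j₀]
    · simp
    · intro j _ hne
      have h1 : (j : ℕ) < d + 1 := j.isLt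
      have h2 : (j₀ : ℕ) < d + 1 := j₀.isLt
      have h3 : (j : ℕ) ≠ (j₀ : ℕ) := fun h => hne (Fin.ext h)
      simp only [Polynomial.coeff_C_mul, Polynomial.coeff_X_pow]
      rw [if_neg (by omega)]
      ring
    · simp
  have hQne : Q ≠ 0 := by
    obtain ⟨j₀, hj₀⟩ := Function.ne_iff.1 hv
    intro h
    rw [h] at hQcoeff
    exact hj₀ (by simpa using (hQcoeff j₀).symm)
  set R : ℚ[X] := (X + 1) ^ n * Q with hR
  have hRne : R ≠ 0 := mul_ne_zero (pow_ne_zero _ (by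
    intro h
    have := congrArg (fun p => Polynomial.coeff p 0) h
    simp at this)) hQne
  -- coefficient formula for R
  have hRcoeff : ∀ t : ℕ, R.coeff t =
      ∑ j : Fin (d + 1), v j * (if d - (j : ℕ) ≤ t then (n.choose (t - (d - (j : ℕ))) : ℚ) else 0) := by
    intro t
    rw [hR, hQ, Finset.mul_sum]
    rw [Polynomial.finset_sum_coeff]
    congr 1
    ext j
    rw [show (X + 1 : ℚ[X]) ^ n * (C (v j) * X ^ (d - (j : ℕ)))
        = C (v j) * ((X + 1) ^ n * X ^ (d - (j : ℕ))) by ring]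
    rw [Polynomial.coeff_C_mul, Polynomial.coeff_mul_X_pow']
    congr 1
    split_ifs with h
    · rw [Polynomial.coeff_X_add_one_pow]
    · rfl
  -- the vanishing window
  have hwindow : ∀ i : Fin (d + 1), R.coeff (k + d - (i : ℕ)) = 0 := by
    intro i
    have hmvi : (Matrix.of fun i j : Fin (d + 1) =>
        if h : (0 : ℤ) ≤ (e : ℤ) - d - 1 - (i : ℤ) + (j : ℤ) then
          ((e + f - 2 * d - 2).choose ((e : ℤ) - d - 1 - (i : ℤ) + (j : ℤ)).toNat : ℚ)
        else 0).mulVec v i = 0 := by rw [hmv]; rfl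
    rw [Matrix.mulVec, dotProduct] at hmvi
    rw [hRcoeff]
    refine Eq.trans (Finset.sum_congr rfl ?_) hmvi
    intro j _
    have hi : (i : ℕ) < d + 1 := i.isLt
    have hj : (j : ℕ) < d + 1 := j.isLt
    rw [mul_comm (v j)]
    congr 1
    simp only [Matrix.of_apply]
    by_cases hcond : (0 : ℤ) ≤ (e : ℤ) - d - 1 - (i : ℤ) + (j : ℤ)
    · rw [if_pos (by omega), dif_pos hcond]
      have hA : ((e : ℤ) - d - 1 - (i : ℤ) + (j : ℤ)).toNat = k + d - (i : ℕ) - (d - (j : ℕ)) := by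
        omega
      rw [hA]
    · rw [if_neg (by omega), dif_neg hcond]
  -- support bound
  have hsupp : R.support ⊆ Finset.range (n + d + 1) \ Finset.Icc k (k + d) := by
    intro m hm
    have hmne : R.coeff m ≠ 0 := Polynomial.mem_support_iff.1 hm
    rw [Finset.mem_sdiff, Finset.mem_range, Finset.mem_Icc]
    constructor
    · have h1 : m ≤ R.natDegree := Polynomial.le_natDegree_of_ne_zero hmne
      have h2 : R.natDegree ≤ n + d := by
        apply le_trans (Polynomial.natDegree_mul_le)
        have h3 : ((X + 1 : ℚ[X]) ^ n).natDegree = n := by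
          rw [show ((X + 1 : ℚ[X])) = X + C 1 by simp, Polynomial.natDegree_pow,
            Polynomial.natDegree_X_add_C, mul_one]
        have h4 : Q.natDegree ≤ d := by
          rw [hQ]
          apply Polynomial.natDegree_sum_le_of_forall_le
          intro j _
          apply le_trans (Polynomial.natDegree_C_mul_le _ _)
          rw [Polynomial.natDegree_X_pow]
          omega
        omega
      omega
    · rintro ⟨h1, h2⟩
      apply hmne
      have := hwindow ⟨k + d - m, by omega⟩
      simpa [show k + d - (k + d - m) = m by omega] using this
  have hcard : (Finset.range (n + d + 1) \ Finset.Icc k (k + d)).card = n := by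
    rw [Finset.card_sdiff_of_subset (by
      intro x hx
      rw [Finset.mem_Icc] at hx
      rw [Finset.mem_range]
      omega)]
    rw [Finset.card_range, Nat.card_Icc]
    omega
  have hfew := few_terms R hRne n ⟨Q, rfl⟩
  have := Finset.card_le_card hsupp
  omega
end
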